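/- arXiv:1312.1516 — 2 statements merged into one kernel-verified Lean document; each statement's English description precedes it below -/
import Mathlib

section
/- With notation as before, suppose W_{ψ,φ} is bounded on BMOA. Then limsup_{|φ(a)|→1} ‖W_{ψ,φ} f_a‖_* ≤ 2 · limsup_{n→∞} ‖ψ·φⁿ‖_*, where f_a = σ_{φ(a)} - φ(a). Precisely: for every ε > 0 there is r < 1 such that for all a ∈ 𝔻 with |φ(a)| > r, ‖W_{ψ,φ} f_a‖_* ≤ 2·limsup_{n→∞} ‖ψ·φⁿ‖_* + ε. -/
open Complex MeasureTheory Filter Set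

noncomputable section

/-- The open unit disc in `ℂ`. -/
def UD : Set ℂ := Metric.ball 0 1

/-- The disc automorphism `σ_a(z) = (a - z)/(1 - conj a · z)` exchanging `0` and `a`. -/
def mob (a z : ℂ) : ℂ := (a - z) / (1 - (starRingEnd ℂ) a * z)

/-- The `p`-th integral mean of `f` on the circle of radius `r`. -/
def meanp (p : ℝ) (f : ℂ → ℂ) (r : ℝ) : ℝ :=
  (∫ θ in (0:ℝ)..2 * Real.pi, ‖f ((r : ℂ) * Complex.exp (θ * Complex.I))‖ ^ p) / (2 * Real.pi)

/-- The `H^p` norm of `f`, as the supremum of the integral means over radii `r < 1`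
(for analytic `f` the means are nondecreasing in `r`, so this equals the limit as `r → 1`). -/
def hpNorm (p : ℝ) (f : ℂ → ℂ) : ℝ := ⨆ r : Ico (0:ℝ) 1, (meanp p f r) ^ (1 / p)

/-- The `H²` norm. -/
def h2 (f : ℂ → ℂ) : ℝ := hpNorm 2 f

/-- Membership in the Hardy space `H²`: analytic on the disc with bounded integral means. -/
def MemH2 (f : ℂ → ℂ) : Prop :=
  AnalyticOn ℂ f UD ∧ BddAbove (range fun r : Ico (0:ℝ) 1 => (meanp 2 f r) ^ ((1:ℝ) / 2))

/-- The BMOA seminorm `‖f‖_* = sup_{a ∈ 𝔻} ‖f ∘ σ_a - f(a)‖₂`. -/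
def bmoaSemi (f : ℂ → ℂ) : ℝ := ⨆ a : UD, h2 (fun z => f (mob a z) - f (a : ℂ))

/-- Membership in BMOA: in `H²` with bounded seminorm. -/
def MemBMOA (f : ℂ → ℂ) : Prop :=
  MemH2 f ∧ BddAbove (range fun a : UD => h2 (fun z => f (mob a z) - f (a : ℂ)))

/-- The BMOA norm `‖f‖ = |f(0)| + ‖f‖_*`. -/
def bmoaNorm (f : ℂ → ℂ) : ℝ := ‖f 0‖ + bmoaSemi f

/-- `L(w) = log (2/(1 - |w|²))`. -/
def Lfun (w : ℂ) : ℝ := Real.log (2 / (1 - ‖w‖ ^ 2))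

/-- An analytic self-map of the unit disc. -/
def SelfMap (φ : ℂ → ℂ) : Prop := AnalyticOn ℂ φ UD ∧ MapsTo φ UD UD

/-- The weighted composition operator `W_{ψ,φ} f = ψ · (f ∘ φ)`. -/
def wcomp (ψ φ f : ℂ → ℂ) : ℂ → ℂ := fun z => ψ z * f (φ z)

/-- `α(a) = |ψ(a)| · ‖σ_{φ(a)} ∘ φ ∘ σ_a‖₂`. -/
def alphaF (ψ φ : ℂ → ℂ) (a : ℂ) : ℝ := ‖ψ a‖ * h2 (fun z => mob (φ a) (φ (mob a z)))

/-- `β(a) = L(φ(a)) · ‖ψ ∘ σ_a - ψ(a)‖₂`. -/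
def betaF (ψ φ : ℂ → ℂ) (a : ℂ) : ℝ := Lfun (φ a) * h2 (fun z => ψ (mob a z) - ψ a)

/-- `W_{ψ,φ}` is a bounded operator on BMOA. -/
def BoundedOnBMOA (ψ φ : ℂ → ℂ) : Prop :=
  ∃ M : ℝ, 0 ≤ M ∧ ∀ f, MemBMOA f →
    MemBMOA (wcomp ψ φ f) ∧ bmoaNorm (wcomp ψ φ f) ≤ M * bmoaNorm f

/-- The operator norm of an operator on BMOA. -/
def opNormBMOA (T : (ℂ → ℂ) → (ℂ → ℂ)) : ℝ :=
  sInf {M : ℝ | 0 ≤ M ∧ ∀ f, MemBMOA f → bmoaNorm (T f) ≤ M * bmoaNorm f}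

/-- A linear operator mapping BMOA into BMOA. -/
def LinOnBMOA (K : (ℂ → ℂ) → (ℂ → ℂ)) : Prop :=
  (∀ f, MemBMOA f → MemBMOA (K f)) ∧
  (∀ f g, MemBMOA f → MemBMOA g → ∀ c : ℂ,
    K (fun z => f z + c * g z) = fun z => K f z + c * K g z)

/-- A compact operator on BMOA: bounded sequences are mapped to sequences with
a Cauchy (in BMOA norm) subsequence. -/
def CompactOnBMOA (K : (ℂ → ℂ) → (ℂ → ℂ)) : Prop :=
  LinOnBMOA K ∧ ∀ u : ℕ → (ℂ → ℂ), (∀ n, MemBMOA (u n) ∧ bmoaNorm (u n) ≤ 1) →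
    ∃ s : ℕ → ℕ, StrictMono s ∧ ∀ ε > (0:ℝ), ∃ N, ∀ m ≥ N, ∀ n ≥ N,
      bmoaNorm (fun z => K (u (s m)) z - K (u (s n)) z) ≤ ε

/-- The essential norm of an operator on BMOA: distance to the compact operators. -/
def essNormBMOA (T : (ℂ → ℂ) → (ℂ → ℂ)) : ℝ :=
  sInf {M : ℝ | 0 ≤ M ∧ ∃ K, CompactOnBMOA K ∧
    ∀ f, MemBMOA f → bmoaNorm (fun z => T f z - K f z) ≤ M * bmoaNorm f}

/-- Membership in VMOA: vanishing mean oscillation near the boundary. -/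
def MemVMOA (f : ℂ → ℂ) : Prop :=
  MemBMOA f ∧ ∀ ε > (0:ℝ), ∃ r : ℝ, r < 1 ∧ ∀ a ∈ UD, r < ‖a‖ →
    h2 (fun z => f (mob a z) - f a) ≤ ε

/-- `W_{ψ,φ}` is a bounded operator on VMOA. -/
def BoundedOnVMOA (ψ φ : ℂ → ℂ) : Prop :=
  ∃ M : ℝ, 0 ≤ M ∧ ∀ f, MemVMOA f →
    MemVMOA (wcomp ψ φ f) ∧ bmoaNorm (wcomp ψ φ f) ≤ M * bmoaNorm f

/-- A compact operator on VMOA. -/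
def CompactOnVMOA (K : (ℂ → ℂ) → (ℂ → ℂ)) : Prop :=
  ((∀ f, MemVMOA f → MemVMOA (K f)) ∧
    (∀ f g, MemVMOA f → MemVMOA g → ∀ c : ℂ,
      K (fun z => f z + c * g z) = fun z => K f z + c * K g z)) ∧
  ∀ u : ℕ → (ℂ → ℂ), (∀ n, MemVMOA (u n) ∧ bmoaNorm (u n) ≤ 1) →
    ∃ s : ℕ → ℕ, StrictMono s ∧ ∀ ε > (0:ℝ), ∃ N, ∀ m ≥ N, ∀ n ≥ N,
      bmoaNorm (fun z => K (u (s m)) z - K (u (s n)) z) ≤ ε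

/-- The essential norm of an operator on VMOA. -/
def essNormVMOA (T : (ℂ → ℂ) → (ℂ → ℂ)) : ℝ :=
  sInf {M : ℝ | 0 ≤ M ∧ ∃ K, CompactOnVMOA K ∧
    ∀ f, MemVMOA f → bmoaNorm (fun z => T f z - K f z) ≤ M * bmoaNorm f}

/-- `limsup_{|φ(a)| → 1} β(a) = inf_{r < 1} sup {β(a) : a ∈ 𝔻, |φ(a)| > r}`
(interpreted as `0` if `sup_a |φ(a)| < 1`). -/
def limsupBeta (ψ φ : ℂ → ℂ) : ℝ :=
  ⨅ r : Ico (0:ℝ) 1, sSup (betaF ψ φ '' {a ∈ UD | (r : ℝ) < ‖φ a‖})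

/-- `limsup_{|φ(a)| → 1} α(a)`. -/
def limsupAlpha (ψ φ : ℂ → ℂ) : ℝ :=
  ⨅ r : Ico (0:ℝ) 1, sSup (alphaF ψ φ '' {a ∈ UD | (r : ℝ) < ‖φ a‖})

/-- `s(r) = 2(1 + r)/(1 - r)`. -/
def sFun (r : ℝ) : ℝ := 2 * (1 + r) / (1 - r)

/-- The radial limit of `f` at a boundary point `ξ` (junk value if the limit does not exist). -/
def radLim (f : ℂ → ℂ) (ξ : ℂ) : ℂ :=
  limUnder (nhdsWithin 1 (Iio (1:ℝ))) (fun r : ℝ => f ((r : ℂ) * ξ))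

/-- `f` has radial limit `w` at the boundary point `ξ`. -/
def HasRadialLimit (f : ℂ → ℂ) (ξ w : ℂ) : Prop :=
  Tendsto (fun r : ℝ => f ((r : ℂ) * ξ)) (nhdsWithin 1 (Iio (1:ℝ))) (nhds w)

/-- The test functions `f_a = σ_{φ(a)} - φ(a)`. -/
def testF (φ : ℂ → ℂ) (a : ℂ) : ℂ → ℂ := fun z => mob (φ a) z - φ a

/-- `h_a(z) = log (2/(1 - conj(φ(a)) z))` (principal branch). -/
def hFun (φ : ℂ → ℂ) (a z : ℂ) : ℂ := Complex.log (2 / (1 - (starRingEnd ℂ) (φ a) * z))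

/-- `g_a = h_a² / h_a(φ(a))`. -/
def gFun (φ : ℂ → ℂ) (a z : ℂ) : ℂ := (hFun φ a z) ^ 2 / hFun φ a (φ a)

end


noncomputable section Stmt4Aux

open intervalIntegral Metric
open scoped Real

namespace Stmt4Aux

/-- point on circle of radius r -/
def cpt (r θ : ℝ) : ℂ := (r : ℂ) * Complex.exp (θ * Complex.I)

/-- squared L² integral over the circle parametrization -/
def J (u : ℝ → ℂ) : ℝ := ∫ θ in (0:ℝ)..(2*π), ‖u θ‖^2

lemma two_pi_pos : (0:ℝ) < 2*π := by positivity

lemma norm_cpt {r : ℝ} (hr : 0 ≤ r) (θ : ℝ) : ‖cpt r θ‖ = r := by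
  rw [cpt, norm_mul, Complex.norm_exp_ofReal_mul_I, mul_one, Complex.norm_real,
    Real.norm_of_nonneg hr]

lemma cpt_mem_UD {r : ℝ} (hr0 : 0 ≤ r) (hr1 : r < 1) (θ : ℝ) : cpt r θ ∈ UD := by
  simp only [UD, Metric.mem_ball, dist_zero_right]
  rw [norm_cpt hr0]; exact hr1

lemma J_nonneg (u : ℝ → ℂ) : 0 ≤ J u := by
  apply intervalIntegral.integral_nonneg two_pi_pos.le
  intro θ _; positivity

lemma meanp_two_eq (f : ℂ → ℂ) (r : ℝ) :
    meanp 2 f r = J (fun θ => f (cpt r θ)) / (2*π) := by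
  unfold meanp J cpt
  congr 1
  apply intervalIntegral.integral_congr
  intro θ _
  dsimp only
  rw [show (2:ℝ) = ((2:ℕ):ℝ) by norm_num, Real.rpow_natCast]

lemma meanp_two_nonneg (f : ℂ → ℂ) (r : ℝ) : 0 ≤ meanp 2 f r := by
  rw [meanp_two_eq]; exact div_nonneg (J_nonneg _) two_pi_pos.le

lemma h2_eq (f : ℂ → ℂ) : h2 f = ⨆ r : Set.Ico (0:ℝ) 1, Real.sqrt (meanp 2 f r) := by
  unfold h2 hpNorm
  congr 1
  funext r
  rw [Real.sqrt_eq_rpow]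

lemma h2_nonneg (f : ℂ → ℂ) : 0 ≤ h2 f := by
  rw [h2_eq]; exact Real.iSup_nonneg fun _ => Real.sqrt_nonneg _

lemma bmoaSemi_nonneg (f : ℂ → ℂ) : 0 ≤ bmoaSemi f :=
  Real.iSup_nonneg fun _ => h2_nonneg _

lemma J_le_of_bound {u : ℝ → ℂ} {C : ℝ} (hC : 0 ≤ C) (h : ∀ θ, ‖u θ‖ ≤ C) :
    J u ≤ 2*π * C^2 := by
  by_cases hi : IntervalIntegrable (fun θ => ‖u θ‖^2) MeasureTheory.volume 0 (2*π)
  · have : J u ≤ ∫ _θ in (0:ℝ)..(2*π), C^2 := by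
      apply intervalIntegral.integral_mono_on two_pi_pos.le hi intervalIntegrable_const
      intro θ _
      exact pow_le_pow_left₀ (norm_nonneg _) (h θ) 2
    simpa using this
  · rw [J, intervalIntegral.integral_undef hi]; positivity

lemma sqrt_meanp_le_of_bound {f : ℂ → ℂ} {C : ℝ} {r : ℝ} (hr : r ∈ Set.Ico (0:ℝ) 1)
    (hC : 0 ≤ C) (h : ∀ z ∈ UD, ‖f z‖ ≤ C) : Real.sqrt (meanp 2 f r) ≤ C := by
  rw [meanp_two_eq]
  have hJ : J (fun θ => f (cpt r θ)) ≤ 2*π*C^2 :=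
    J_le_of_bound hC fun θ => h _ (cpt_mem_UD hr.1 hr.2 θ)
  have : J (fun θ => f (cpt r θ)) / (2*π) ≤ C^2 := by
    rw [div_le_iff₀ two_pi_pos]; linarith
  calc Real.sqrt (J (fun θ => f (cpt r θ)) / (2*π)) ≤ Real.sqrt (C^2) :=
        Real.sqrt_le_sqrt this
    _ = C := by rw [Real.sqrt_sq hC]

lemma h2_le_of_bound {f : ℂ → ℂ} {C : ℝ} (hC : 0 ≤ C) (h : ∀ z ∈ UD, ‖f z‖ ≤ C) :
    h2 f ≤ C := by
  rw [h2_eq]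
  exact Real.iSup_le (fun r => sqrt_meanp_le_of_bound r.2 hC h) hC

/-! ### Möbius basics -/

lemma normSq_identity (a z : ℂ) :
    Complex.normSq (1 - (starRingEnd ℂ) a * z) - Complex.normSq (a - z)
      = (1 - Complex.normSq a) * (1 - Complex.normSq z) := by
  simp only [Complex.normSq_apply, Complex.sub_re, Complex.sub_im, Complex.mul_re,
    Complex.mul_im, Complex.one_re, Complex.one_im, Complex.conj_re, Complex.conj_im]
  ring

lemma ofReal_norm_sq (z : ℂ) : ((‖z‖^2 : ℝ) : ℂ) = z * (starRingEnd ℂ) z := by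
  rw [show ‖z‖^2 = Complex.normSq z by rw [Complex.sq_norm],
    Complex.mul_conj]

lemma prod_lt_one' {x y : ℝ} (hx0 : 0 ≤ x) (hx : x ≤ 1) (hy0 : 0 ≤ y) (hy : y < 1) :
    x * y < 1 := by nlinarith

lemma denom_ne_zero {a z : ℂ} (ha : ‖a‖ ≤ 1) (hz : ‖z‖ < 1) :
    1 - (starRingEnd ℂ) a * z ≠ 0 := by
  intro h
  have h2 : ‖(starRingEnd ℂ) a * z‖ < 1 := by
    rw [norm_mul, RCLike.norm_conj]
    exact prod_lt_one' (norm_nonneg _) ha (norm_nonneg _) hz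
  have : (1:ℂ) = (starRingEnd ℂ) a * z := by linear_combination h
  rw [← this] at h2
  simp at h2

lemma mob_normSq_le {a z : ℂ} {r : ℝ} (ha : ‖a‖ < 1) (hzr : ‖z‖ ≤ r) (hr : r ≤ 1) :
    ‖mob a z‖^2 ≤ 1 - (1-‖a‖^2)*(1-r^2)/4 := by
  have hz1 : ‖z‖ < 1 ∨ ‖z‖ ≤ 1 := Or.inr (hzr.trans hr)
  have hz : ‖z‖ ≤ 1 := hzr.trans hr
  have hd : 1 - (starRingEnd ℂ) a * z ≠ 0 := by
    intro h
    have heq : ‖(1:ℂ)‖ = ‖(starRingEnd ℂ) a * z‖ := by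
      rw [show (1:ℂ) = (starRingEnd ℂ) a * z by linear_combination h]
    rw [norm_one, norm_mul, RCLike.norm_conj] at heq
    have := mul_le_of_le_one_right (norm_nonneg a) hz
    nlinarith
  have hD0 : 0 < Complex.normSq (1 - (starRingEnd ℂ) a * z) := Complex.normSq_pos.mpr hd
  have hD4 : Complex.normSq (1 - (starRingEnd ℂ) a * z) ≤ 4 := by
    have h1 : ‖(1:ℂ) - (starRingEnd ℂ) a * z‖ ≤ 2 := by
      calc ‖(1:ℂ) - (starRingEnd ℂ) a * z‖ ≤ ‖(1:ℂ)‖ + ‖(starRingEnd ℂ) a * z‖ :=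
            norm_sub_le _ _
        _ ≤ 1 + 1 := by
            rw [norm_one, norm_mul, RCLike.norm_conj]
            nlinarith [norm_nonneg z, norm_nonneg a]
        _ = 2 := by norm_num
    have := Complex.sq_norm (1 - (starRingEnd ℂ) a * z)
    nlinarith [norm_nonneg (1 - (starRingEnd ℂ) a * z)]
  have hq : (1-‖a‖^2)*(1-r^2) ≤ (1 - Complex.normSq a) * (1 - Complex.normSq z) := by
    have h1 : Complex.normSq a = ‖a‖^2 := by rw [Complex.sq_norm]
    have h2 : Complex.normSq z = ‖z‖^2 := by rw [Complex.sq_norm]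
    rw [h1, h2]
    have hzr2 : ‖z‖^2 ≤ r^2 := by nlinarith [norm_nonneg z]
    have h1r : 1 - r^2 ≤ 1 - ‖z‖^2 := by linarith
    have hA : 0 ≤ 1 - ‖a‖^2 := by nlinarith [norm_nonneg a]
    exact mul_le_mul_of_nonneg_left h1r hA
  have hqnn : 0 ≤ (1-‖a‖^2)*(1-r^2) := by
    apply mul_nonneg
    · nlinarith [norm_nonneg a]
    · have : 0 ≤ r := le_trans (norm_nonneg z) hzr
      nlinarith
  have hmob : ‖mob a z‖^2 = Complex.normSq (a - z) / Complex.normSq (1 - (starRingEnd ℂ) a * z) := by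
    rw [mob, norm_div, div_pow]
    rw [show ‖a - z‖^2 = Complex.normSq (a-z) by rw [Complex.sq_norm]]
    rw [show ‖1 - (starRingEnd ℂ) a * z‖^2 = Complex.normSq (1 - (starRingEnd ℂ) a * z) by
      rw [Complex.sq_norm]]
  rw [hmob]
  have hid := normSq_identity a z
  rw [div_le_iff₀ hD0]
  nlinarith [hq, hD4, hD0, hqnn, mul_nonneg hqnn (by linarith :
    (0:ℝ) ≤ 4 - Complex.normSq (1 - (starRingEnd ℂ) a * z))]

def Rb (a : ℂ) (r : ℝ) : ℝ := Real.sqrt (1 - (1-‖a‖^2)*(1-r^2)/4)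

lemma Rb_nonneg (a : ℂ) (r : ℝ) : 0 ≤ Rb a r := Real.sqrt_nonneg _

lemma mob_norm_le_Rb {a z : ℂ} {r : ℝ} (ha : ‖a‖ < 1) (hzr : ‖z‖ ≤ r) (hr : r ≤ 1) :
    ‖mob a z‖ ≤ Rb a r := by
  rw [Rb, show ‖mob a z‖ = Real.sqrt (‖mob a z‖^2) by rw [Real.sqrt_sq (norm_nonneg _)]]
  exact Real.sqrt_le_sqrt (mob_normSq_le ha hzr hr)

lemma Rb_lt_one {a : ℂ} {r : ℝ} (ha : ‖a‖ < 1) (hr0 : 0 ≤ r) (hr : r < 1) :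
    Rb a r < 1 := by
  have hA : 0 < 1 - ‖a‖^2 := by nlinarith [norm_nonneg a]
  have hR : 0 < 1 - r^2 := by nlinarith
  have hq4 : (1-‖a‖^2)*(1-r^2) ≤ 1 := by
    nlinarith [mul_nonneg (sq_nonneg ‖a‖) hR.le, sq_nonneg r]
  have h3 : 0 ≤ 1 - (1-‖a‖^2)*(1-r^2)/4 := by linarith
  have h4 : 1 - (1-‖a‖^2)*(1-r^2)/4 < 1 := by nlinarith [mul_pos hA hR]
  calc Rb a r < Real.sqrt 1 := Real.sqrt_lt_sqrt h3 h4
    _ = 1 := Real.sqrt_one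

lemma mob_mem_UD {a z : ℂ} (ha : a ∈ UD) (hz : z ∈ UD) : mob a z ∈ UD := by
  simp only [UD, Metric.mem_ball, dist_zero_right] at *
  calc ‖mob a z‖ ≤ Rb a ‖z‖ := mob_norm_le_Rb ha (le_refl _) hz.le
    _ < 1 := Rb_lt_one ha (norm_nonneg _) hz

lemma mob_zero (a : ℂ) : mob a 0 = a := by simp [mob]

lemma mob_differentiableOn {a : ℂ} (ha : ‖a‖ ≤ 1) :
    DifferentiableOn ℂ (mob a) UD := by
  apply DifferentiableOn.div
  · exact (differentiableOn_const a).sub differentiableOn_id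
  · exact (differentiableOn_const 1).sub
      ((differentiableOn_const _).mul differentiableOn_id)
  · intro z hz
    exact denom_ne_zero ha (by simpa [UD, Metric.mem_ball, dist_zero_right] using hz)

lemma mob_continuousOn {a : ℂ} (ha : ‖a‖ ≤ 1) : ContinuousOn (mob a) UD :=
  (mob_differentiableOn ha).continuousOn

/-! ### Cauchy–Schwarz and Minkowski -/

lemma CS {u v : ℝ → ℝ}
    (hu2 : IntervalIntegrable (fun θ => u θ^2) MeasureTheory.volume 0 (2*π))
    (hv2 : IntervalIntegrable (fun θ => v θ^2) MeasureTheory.volume 0 (2*π))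
    (huv : IntervalIntegrable (fun θ => u θ * v θ) MeasureTheory.volume 0 (2*π)) :
    (∫ θ in (0:ℝ)..(2*π), u θ * v θ)^2 ≤
      (∫ θ in (0:ℝ)..(2*π), u θ^2) * (∫ θ in (0:ℝ)..(2*π), v θ^2) := by
  set A := ∫ θ in (0:ℝ)..(2*π), u θ^2 with hA
  set B := ∫ θ in (0:ℝ)..(2*π), u θ * v θ with hB
  set C := ∫ θ in (0:ℝ)..(2*π), v θ^2 with hC
  have key : ∀ t : ℝ, 0 ≤ C * (t*t) + (2*B)*t + A := by
    intro t
    have hint : ∫ θ in (0:ℝ)..(2*π), (u θ + t*v θ)^2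
        = A + ((2*t)*B + (t*t)*C) := by
      have h1 : ∀ θ, (u θ + t*v θ)^2
          = u θ^2 + ((2*t)*(u θ*v θ) + (t*t)*(v θ^2)) := fun θ => by ring
      rw [intervalIntegral.integral_congr (g := fun θ =>
        u θ^2 + ((2*t)*(u θ*v θ) + (t*t)*(v θ^2))) (fun θ _ => h1 θ)]
      rw [intervalIntegral.integral_add hu2 ((huv.const_mul _).add (hv2.const_mul _)),
        intervalIntegral.integral_add (huv.const_mul _) (hv2.const_mul _),
        intervalIntegral.integral_const_mul, intervalIntegral.integral_const_mul]
    have h0 : 0 ≤ ∫ θ in (0:ℝ)..(2*π), (u θ + t*v θ)^2 :=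
      intervalIntegral.integral_nonneg two_pi_pos.le (fun θ _ => sq_nonneg _)
    rw [hint] at h0
    linarith
  have hd := discrim_le_zero key
  rw [discrim] at hd
  nlinarith [hd]

lemma sqrt_J_add_le (u v : ℝ → ℂ) (hu : Continuous u) (hv : Continuous v) :
    Real.sqrt (J (fun θ => u θ + v θ)) ≤ Real.sqrt (J u) + Real.sqrt (J v) := by
  have hu2 : IntervalIntegrable (fun θ => ‖u θ‖^2) MeasureTheory.volume 0 (2*π) :=
    (hu.norm.pow 2).intervalIntegrable _ _
  have hv2 : IntervalIntegrable (fun θ => ‖v θ‖^2) MeasureTheory.volume 0 (2*π) :=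
    (hv.norm.pow 2).intervalIntegrable _ _
  have huv : IntervalIntegrable (fun θ => ‖u θ‖ * ‖v θ‖) MeasureTheory.volume 0 (2*π) :=
    (hu.norm.mul hv.norm).intervalIntegrable _ _
  have hBsq : (∫ θ in (0:ℝ)..(2*π), ‖u θ‖ * ‖v θ‖)^2 ≤ J u * J v := CS hu2 hv2 huv
  have hBnn : 0 ≤ ∫ θ in (0:ℝ)..(2*π), ‖u θ‖ * ‖v θ‖ :=
    intervalIntegral.integral_nonneg two_pi_pos.le
      (fun θ _ => mul_nonneg (norm_nonneg _) (norm_nonneg _))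
  have hB : (∫ θ in (0:ℝ)..(2*π), ‖u θ‖ * ‖v θ‖) ≤ Real.sqrt (J u) * Real.sqrt (J v) := by
    rw [← Real.sqrt_mul (J_nonneg u)]
    rw [show (∫ θ in (0:ℝ)..(2*π), ‖u θ‖ * ‖v θ‖)
      = Real.sqrt ((∫ θ in (0:ℝ)..(2*π), ‖u θ‖ * ‖v θ‖)^2) by rw [Real.sqrt_sq hBnn]]
    exact Real.sqrt_le_sqrt hBsq
  have hJadd : J (fun θ => u θ + v θ) ≤ (Real.sqrt (J u) + Real.sqrt (J v))^2 := by
    have step1 : J (fun θ => u θ + v θ)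
        ≤ ∫ θ in (0:ℝ)..(2*π), (‖u θ‖^2 + (2*(‖u θ‖*‖v θ‖) + ‖v θ‖^2)) := by
      apply intervalIntegral.integral_mono_on two_pi_pos.le
        (((hu.add hv).norm.pow 2).intervalIntegrable _ _)
        (hu2.add ((huv.const_mul 2).add hv2))
      intro θ _
      have h1 : ‖u θ + v θ‖ ≤ ‖u θ‖ + ‖v θ‖ := norm_add_le _ _
      show ‖u θ + v θ‖^2 ≤ _
      nlinarith [norm_nonneg (u θ + v θ), norm_nonneg (u θ), norm_nonneg (v θ)]
    have step2 : ∫ θ in (0:ℝ)..(2*π), (‖u θ‖^2 + (2*(‖u θ‖*‖v θ‖) + ‖v θ‖^2))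
        = J u + (2*(∫ θ in (0:ℝ)..(2*π), ‖u θ‖*‖v θ‖) + J v) := by
      rw [intervalIntegral.integral_add hu2 ((huv.const_mul 2).add hv2),
        intervalIntegral.integral_add (huv.const_mul 2) hv2,
        intervalIntegral.integral_const_mul]
      rfl
    have hsq : (Real.sqrt (J u))^2 = J u := Real.sq_sqrt (J_nonneg u)
    have hsq' : (Real.sqrt (J v))^2 = J v := Real.sq_sqrt (J_nonneg v)
    calc J (fun θ => u θ + v θ) ≤ _ := step1
      _ = J u + (2*(∫ θ in (0:ℝ)..(2*π), ‖u θ‖*‖v θ‖) + J v) := step2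
      _ ≤ J u + (2*(Real.sqrt (J u) * Real.sqrt (J v)) + J v) := by linarith
      _ = (Real.sqrt (J u) + Real.sqrt (J v))^2 := by nlinarith [hsq, hsq']
  calc Real.sqrt (J (fun θ => u θ + v θ))
      ≤ Real.sqrt ((Real.sqrt (J u) + Real.sqrt (J v))^2) := Real.sqrt_le_sqrt hJadd
    _ = Real.sqrt (J u) + Real.sqrt (J v) := Real.sqrt_sq
        (by positivity)


/-! ### Mean value property and Poisson formula -/

lemma continuous_cpt (r : ℝ) : Continuous (cpt r) := by
  unfold cpt
  exact continuous_const.mul (Complex.continuous_exp.comp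
    (Complex.continuous_ofReal.mul continuous_const))

lemma cpt_eq_circleMap (r θ : ℝ) : circleMap 0 r θ = cpt r θ := by
  simp [circleMap, cpt]

lemma cpt_mem_closedBall {r : ℝ} (hr : 0 ≤ r) (θ : ℝ) :
    cpt r θ ∈ Metric.closedBall (0:ℂ) r := by
  simp only [Metric.mem_closedBall, dist_zero_right]
  rw [norm_cpt hr]

lemma cont_comp_cpt {g : ℂ → ℂ} {ρ : ℝ} (hρ : 0 ≤ ρ)
    (hc : ContinuousOn g (Metric.closedBall (0:ℂ) ρ)) :
    Continuous fun t => g (cpt ρ t) :=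
  hc.comp_continuous (continuous_cpt ρ) (cpt_mem_closedBall hρ)

lemma mean_value {F : ℂ → ℂ} {r : ℝ} (hr : 0 ≤ r)
    (hd : DifferentiableOn ℂ F (Metric.ball 0 r))
    (hc : ContinuousOn F (Metric.closedBall 0 r)) :
    ∫ θ in (0:ℝ)..(2*π), F (cpt r θ) = ((2*π : ℝ) : ℂ) * F 0 := by
  rcases eq_or_lt_of_le hr with h0 | hr0
  · have hz : ∀ θ : ℝ, cpt r θ = 0 := fun θ => by
      rw [cpt, ← h0]; simp
    rw [intervalIntegral.integral_congr (g := fun _ => F 0) (fun θ _ => by rw [hz θ])]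
    simp [Complex.real_smul]
  · have hDC : DiffContOnCl ℂ F (Metric.ball 0 r) :=
      ⟨hd, hc.mono Metric.closure_ball_subset_closedBall⟩
    have h := hDC.circleIntegral_sub_inv_smul (w := 0)
      (by simpa using hr0 : (0:ℂ) ∈ Metric.ball 0 r)
    rw [circleIntegral] at h
    have key : ∀ θ : ℝ, deriv (circleMap 0 r) θ •
        ((circleMap 0 r θ - 0)⁻¹ • F (circleMap 0 r θ))
        = Complex.I * F (cpt r θ) := by
      intro θ
      have hne : circleMap 0 r θ ≠ 0 := circleMap_ne_center hr0.ne'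
      rw [deriv_circleMap, smul_eq_mul, smul_eq_mul, sub_zero, cpt_eq_circleMap]
      rw [cpt_eq_circleMap] at hne
      field_simp
    rw [intervalIntegral.integral_congr (fun θ _ => key θ),
      intervalIntegral.integral_const_mul] at h
    apply mul_left_cancel₀ Complex.I_ne_zero
    rw [h, smul_eq_mul]
    push_cast
    ring

lemma re_formula {ξ w : ℂ} (h : ‖w‖ < ‖ξ‖) :
    ((ξ+w)/(ξ-w)).re = (‖ξ‖^2-‖w‖^2)/‖ξ-w‖^2 := by
  have hnum : (ξ+w).re*(ξ-w).re + (ξ+w).im*(ξ-w).im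
      = Complex.normSq ξ - Complex.normSq w := by
    simp only [Complex.normSq_apply, Complex.add_re, Complex.add_im, Complex.sub_re,
      Complex.sub_im]
    ring
  rw [Complex.div_re]
  rw [show ‖ξ-w‖^2 = Complex.normSq (ξ-w) by rw [Complex.sq_norm],
    show ‖ξ‖^2 = Complex.normSq ξ by rw [Complex.sq_norm],
    show ‖w‖^2 = Complex.normSq w by rw [Complex.sq_norm]]
  rw [← add_div, hnum]

lemma kernel_identity {ρ : ℝ} (hρ : 0 < ρ) {ξ w : ℂ} (hξ : ‖ξ‖ = ρ) (hw : ‖w‖ < ρ) :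
    (((ρ^2 - ‖w‖^2)/‖ξ - w‖^2 : ℝ) : ℂ)
      = ξ * ((ξ - w)⁻¹ + (starRingEnd ℂ) w * ((ρ:ℂ)^2 - (starRingEnd ℂ) w * ξ)⁻¹) := by
  have hξ0 : ξ ≠ 0 := by
    intro h; rw [h] at hξ; simp at hξ; exact hρ.ne' hξ.symm
  have h1 : ξ - w ≠ 0 := by
    intro h; rw [sub_eq_zero] at h
    rw [← h, hξ] at hw; exact lt_irrefl _ hw
  have h1' : (starRingEnd ℂ) ξ - (starRingEnd ℂ) w ≠ 0 := by
    intro h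
    apply h1
    have := congrArg (starRingEnd ℂ) (show (starRingEnd ℂ) (ξ - w) = 0 by rw [map_sub, h])
    simpa using this
  have e3 : ((ρ:ℝ):ℂ)^2 = ξ * (starRingEnd ℂ) ξ := by
    rw [← hξ, ← Complex.ofReal_pow, ofReal_norm_sq]
  have e1 : ((‖ξ-w‖:ℝ):ℂ)^2 = (ξ-w) * ((starRingEnd ℂ) ξ - (starRingEnd ℂ) w) := by
    rw [← Complex.ofReal_pow, ofReal_norm_sq, map_sub]
  have e2 : ((‖w‖:ℝ):ℂ)^2 = w * (starRingEnd ℂ) w := by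
    rw [← Complex.ofReal_pow, ofReal_norm_sq]
  have h2' : ξ * (starRingEnd ℂ) ξ - (starRingEnd ℂ) w * ξ ≠ 0 := by
    have hne := mul_ne_zero hξ0 h1'
    intro h; apply hne; linear_combination h
  rw [Complex.ofReal_div, Complex.ofReal_sub, Complex.ofReal_pow, Complex.ofReal_pow,
    Complex.ofReal_pow, e3, e1, e2]
  rw [show ξ * (starRingEnd ℂ) ξ - (starRingEnd ℂ) w * ξ
      = ξ * ((starRingEnd ℂ) ξ - (starRingEnd ℂ) w) by ring] at h2' ⊢
  field_simp
  ring

lemma poisson_formula {g : ℂ → ℂ} {ρ : ℝ} (hρ : 0 < ρ)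
    (hd : DifferentiableOn ℂ g (Metric.ball 0 ρ))
    (hc : ContinuousOn g (Metric.closedBall 0 ρ)) {w : ℂ} (hw : ‖w‖ < ρ) :
    ∫ t in (0:ℝ)..(2*π), (((ρ^2 - ‖w‖^2)/‖cpt ρ t - w‖^2 : ℝ) : ℂ) * g (cpt ρ t)
      = ((2*π:ℝ):ℂ) * g w := by
  have hDC : DiffContOnCl ℂ g (Metric.ball 0 ρ) :=
    ⟨hd, hc.mono Metric.closure_ball_subset_closedBall⟩
  have hwball : w ∈ Metric.ball (0:ℂ) ρ := by simpa using hw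
  -- denominator of the reflected kernel does not vanish on the closed ball
  have hden : ∀ ξ : ℂ, ‖ξ‖ ≤ ρ → (ρ:ℂ)^2 - (starRingEnd ℂ) w * ξ ≠ 0 := by
    intro ξ hξ h
    have : ‖((ρ:ℂ))^2‖ = ‖(starRingEnd ℂ) w * ξ‖ := by
      rw [show ((ρ:ℂ))^2 = (starRingEnd ℂ) w * ξ by linear_combination h]
    rw [norm_pow, Complex.norm_real, Real.norm_of_nonneg hρ.le, norm_mul,
      RCLike.norm_conj] at this
    nlinarith [norm_nonneg w, norm_nonneg ξ]
  set h : ℂ → ℂ := fun ξ => g ξ * ((starRingEnd ℂ) w * ((ρ:ℂ)^2 - (starRingEnd ℂ) w * ξ)⁻¹)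
    with hh_def
  have E1 := hDC.circleIntegral_sub_inv_smul hwball
  have hker_diff : DifferentiableOn ℂ (fun ξ : ℂ => ((ρ:ℂ)^2 - (starRingEnd ℂ) w * ξ)⁻¹)
      (Metric.closedBall 0 ρ) := by
    apply DifferentiableOn.inv
    · exact (differentiableOn_const _).sub ((differentiableOn_const _).mul differentiableOn_id)
    · intro ξ hξ
      exact hden ξ (by simpa [Metric.mem_closedBall, dist_zero_right] using hξ)
  have hzh : DiffContOnCl ℂ (fun ξ => ξ * h ξ) (Metric.ball 0 ρ) := by
    constructor
    · exact differentiableOn_id.mul (hd.mul ((differentiableOn_const _).mul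
        (hker_diff.mono Metric.ball_subset_closedBall)))
    · apply ContinuousOn.mono _ Metric.closure_ball_subset_closedBall
      exact continuousOn_id.mul (hc.mul (continuousOn_const.mul hker_diff.continuousOn))
  have E3' := hzh.circleIntegral_sub_inv_smul (show (0:ℂ) ∈ Metric.ball 0 ρ by simpa using hρ)
  have E3 : (∮ z in C(0, ρ), h z) = 0 := by
    have hsub := circleIntegral.integral_sub_inv_smul_sub_smul h 0 0 ρ
    calc (∮ z in C(0, ρ), h z) = ∮ z in C(0, ρ), (z - 0)⁻¹ • (z - 0) • h z := hsub.symm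
      _ = ∮ z in C(0, ρ), (z - 0)⁻¹ • (z * h z) := by
          apply circleIntegral.integral_congr hρ.le
          intro z _
          simp [smul_eq_mul]
      _ = (2 * ↑π * Complex.I) • ((0:ℂ) * h 0) := E3'
      _ = 0 := by simp
  have hconv : ∀ f : ℂ → ℂ, (∮ z in C(0, ρ), f z)
      = ∫ t in (0:ℝ)..(2*π), (cpt ρ t * Complex.I) * f (cpt ρ t) := by
    intro f
    rw [circleIntegral]
    apply intervalIntegral.integral_congr
    intro θ _
    dsimp only
    rw [deriv_circleMap, smul_eq_mul, cpt_eq_circleMap]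
  have EA : ∫ t in (0:ℝ)..(2*π), (cpt ρ t * Complex.I) * ((cpt ρ t - w)⁻¹ * g (cpt ρ t))
      = (2 * ↑π * Complex.I) • g w := by
    rw [← hconv fun z => (z - w)⁻¹ * g z]
    exact E1
  have EB : ∫ t in (0:ℝ)..(2*π), (cpt ρ t * Complex.I) * h (cpt ρ t) = 0 := by
    rw [← hconv h]
    exact E3
  have hgc : Continuous fun t => g (cpt ρ t) := cont_comp_cpt hρ.le hc
  have hcptc : Continuous (cpt ρ) := continuous_cpt ρ
  have hinv1 : Continuous fun t => (cpt ρ t - w)⁻¹ := by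
    apply Continuous.inv₀ (hcptc.sub continuous_const)
    intro t h0
    rw [Pi.sub_apply, sub_eq_zero] at h0
    rw [← h0, norm_cpt hρ.le] at hw
    exact lt_irrefl _ hw
  have hinv2 : Continuous fun t => ((ρ:ℂ)^2 - (starRingEnd ℂ) w * cpt ρ t)⁻¹ := by
    apply Continuous.inv₀ (continuous_const.sub (continuous_const.mul hcptc))
    intro t
    exact hden _ (by rw [norm_cpt hρ.le])
  have hI1 : IntervalIntegrable
      (fun t => (cpt ρ t * Complex.I) * ((cpt ρ t - w)⁻¹ * g (cpt ρ t)))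
      MeasureTheory.volume 0 (2*π) :=
    ((hcptc.mul continuous_const).mul (hinv1.mul hgc)).intervalIntegrable _ _
  have hI2 : IntervalIntegrable (fun t => (cpt ρ t * Complex.I) * h (cpt ρ t))
      MeasureTheory.volume 0 (2*π) := by
    apply Continuous.intervalIntegrable
    exact (hcptc.mul continuous_const).mul (hgc.mul (continuous_const.mul hinv2))
  have key : ∀ t ∈ Set.uIcc (0:ℝ) (2*π),
      Complex.I * ((((ρ^2 - ‖w‖^2)/‖cpt ρ t - w‖^2 : ℝ) : ℂ) * g (cpt ρ t))
      = (cpt ρ t * Complex.I) * ((cpt ρ t - w)⁻¹ * g (cpt ρ t))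
        + (cpt ρ t * Complex.I) * h (cpt ρ t) := by
    intro t _
    rw [kernel_identity hρ (norm_cpt hρ.le t) hw]
    simp only [hh_def]
    ring
  have main : Complex.I * ∫ t in (0:ℝ)..(2*π),
      (((ρ^2 - ‖w‖^2)/‖cpt ρ t - w‖^2 : ℝ) : ℂ) * g (cpt ρ t)
      = (2 * ↑π * Complex.I) • g w := by
    rw [← intervalIntegral.integral_const_mul, intervalIntegral.integral_congr key,
      intervalIntegral.integral_add hI1 hI2, EA, EB, add_zero]
  apply mul_left_cancel₀ Complex.I_ne_zero
  rw [main, smul_eq_mul]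
  push_cast
  ring


lemma kernel_integral {ρ : ℝ} (hρ : 0 < ρ) {w : ℂ} (hw : ‖w‖ < ρ) :
    ∫ t in (0:ℝ)..(2*π), (ρ^2 - ‖w‖^2)/‖cpt ρ t - w‖^2 = 2*π := by
  have h := poisson_formula hρ (g := fun _ => 1) (differentiableOn_const 1)
    continuousOn_const hw
  simp only [mul_one] at h
  rw [intervalIntegral.integral_ofReal] at h
  exact_mod_cast h

lemma cpt_sub_ne_zero {ρ : ℝ} (hρ : 0 < ρ) {w : ℂ} (hw : ‖w‖ < ρ) (t : ℝ) :
    cpt ρ t - w ≠ 0 := by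
  intro h0
  rw [sub_eq_zero] at h0
  rw [← h0, norm_cpt hρ.le] at hw
  exact lt_irrefl _ hw

lemma poisson_bound {g : ℂ → ℂ} {ρ : ℝ} (hρ : 0 < ρ)
    (hd : DifferentiableOn ℂ g (Metric.ball 0 ρ))
    (hc : ContinuousOn g (Metric.closedBall 0 ρ)) {w : ℂ} (hw : ‖w‖ < ρ) :
    2*π * ‖g w‖^2 ≤
      ∫ t in (0:ℝ)..(2*π), ((ρ^2 - ‖w‖^2)/‖cpt ρ t - w‖^2) * ‖g (cpt ρ t)‖^2 := by
  set P : ℝ → ℝ := fun t => (ρ^2 - ‖w‖^2)/‖cpt ρ t - w‖^2 with hP_def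
  have hPnn : ∀ t, 0 ≤ P t := fun t =>
    div_nonneg (by nlinarith [norm_nonneg w]) (sq_nonneg _)
  have hPc : Continuous P := by
    apply Continuous.div continuous_const
    · exact (((continuous_cpt ρ).sub continuous_const).norm.pow 2)
    · intro t
      exact pow_ne_zero 2 (norm_ne_zero_iff.mpr (cpt_sub_ne_zero hρ hw t))
  have hgc : Continuous fun t => g (cpt ρ t) := cont_comp_cpt hρ.le hc
  -- step 1 : Poisson formula gives the L¹ bound
  have hPF := poisson_formula hρ hd hc hw
  have step1 : 2*π * ‖g w‖ ≤ ∫ t in (0:ℝ)..(2*π), P t * ‖g (cpt ρ t)‖ := by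
    have hnorm : ‖∫ t in (0:ℝ)..(2*π), ((P t : ℝ) : ℂ) * g (cpt ρ t)‖
        ≤ ∫ t in (0:ℝ)..(2*π), P t * ‖g (cpt ρ t)‖ := by
      have h1 := intervalIntegral.norm_integral_le_integral_norm
        (f := fun t => ((P t : ℝ) : ℂ) * g (cpt ρ t)) (μ := MeasureTheory.volume)
        two_pi_pos.le
      have h2 : ∀ t, ‖((P t : ℝ) : ℂ) * g (cpt ρ t)‖ = P t * ‖g (cpt ρ t)‖ := by
        intro t
        rw [norm_mul, Complex.norm_real, Real.norm_of_nonneg (hPnn t)]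
      calc ‖∫ t in (0:ℝ)..(2*π), ((P t : ℝ) : ℂ) * g (cpt ρ t)‖
          ≤ ∫ t in (0:ℝ)..(2*π), ‖((P t : ℝ) : ℂ) * g (cpt ρ t)‖ := h1
        _ = ∫ t in (0:ℝ)..(2*π), P t * ‖g (cpt ρ t)‖ :=
            intervalIntegral.integral_congr fun t _ => h2 t
    rw [hPF] at hnorm
    rw [norm_mul, Complex.norm_real, Real.norm_of_nonneg two_pi_pos.le] at hnorm
    exact hnorm
  -- step 2 : Cauchy-Schwarz
  have e1 : (fun t => Real.sqrt (P t)^2) = P := funext fun t => Real.sq_sqrt (hPnn t)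
  have e2 : (fun t => (Real.sqrt (P t) * ‖g (cpt ρ t)‖)^2) = fun t => P t * ‖g (cpt ρ t)‖^2 :=
    funext fun t => by rw [mul_pow, Real.sq_sqrt (hPnn t)]
  have e3 : (fun t => Real.sqrt (P t) * (Real.sqrt (P t) * ‖g (cpt ρ t)‖))
      = fun t => P t * ‖g (cpt ρ t)‖ :=
    funext fun t => by rw [← mul_assoc, Real.mul_self_sqrt (hPnn t)]
  have hcs := CS (u := fun t => Real.sqrt (P t)) (v := fun t => Real.sqrt (P t) * ‖g (cpt ρ t)‖)
    (by rw [e1]; exact hPc.intervalIntegrable _ _)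
    (by rw [e2]; exact (hPc.mul (hgc.norm.pow 2)).intervalIntegrable _ _)
    (by rw [e3]; exact (hPc.mul hgc.norm).intervalIntegrable _ _)
  rw [e1, e2, e3] at hcs
  rw [kernel_integral hρ hw] at hcs
  -- combine
  have hAnn : 0 ≤ ∫ t in (0:ℝ)..(2*π), P t * ‖g (cpt ρ t)‖ :=
    intervalIntegral.integral_nonneg two_pi_pos.le
      (fun t _ => mul_nonneg (hPnn t) (norm_nonneg _))
  nlinarith [step1, hcs, norm_nonneg (g w), two_pi_pos, hAnn,
    mul_le_mul step1 step1 (by positivity) (by positivity)]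



/-- Master lemma: L² mean of `g ∘ τ` on a circle is controlled by the L² mean of `g`
on a larger circle, with a Harnack-type constant. -/
lemma comp_bound {g τ : ℂ → ℂ} {r ρ R : ℝ}
    (hgd : DifferentiableOn ℂ g UD) (hgc : ContinuousOn g UD)
    (hτd : DifferentiableOn ℂ τ UD) (hτc : ContinuousOn τ UD)
    (hr0 : 0 ≤ r) (hr1 : r < 1)
    (hτR : ∀ z : ℂ, ‖z‖ ≤ r → ‖τ z‖ ≤ R) (hR0 : 0 ≤ R) (hRρ : R < ρ) (hρ1 : ρ < 1) :
    J (fun θ => g (τ (cpt r θ)))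
      ≤ ((ρ + ‖τ 0‖)/(ρ - ‖τ 0‖)) * J (fun t => g (cpt ρ t)) := by
  have hρ0 : 0 < ρ := lt_of_le_of_lt hR0 hRρ
  have hτ0R : ‖τ 0‖ ≤ R := hτR 0 (by simpa using hr0)
  have hτ0ρ : ‖τ 0‖ < ρ := lt_of_le_of_lt hτ0R hRρ
  have hcbρ : Metric.closedBall (0:ℂ) ρ ⊆ UD := Metric.closedBall_subset_ball hρ1
  have hgdρ : DifferentiableOn ℂ g (Metric.ball 0 ρ) :=
    hgd.mono (Metric.ball_subset_ball hρ1.le)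
  have hgcρ : ContinuousOn g (Metric.closedBall 0 ρ) := hgc.mono hcbρ
  have hτcpt : Continuous fun θ => τ (cpt r θ) :=
    hτc.comp_continuous (continuous_cpt r) fun θ => cpt_mem_UD hr0 hr1 θ
  have hτmem : ∀ θ : ℝ, ‖τ (cpt r θ)‖ ≤ R := fun θ => hτR _ (le_of_eq (norm_cpt hr0 θ))
  have hτρ : ∀ θ : ℝ, ‖τ (cpt r θ)‖ < ρ := fun θ => lt_of_le_of_lt (hτmem θ) hRρ
  have hgτc : Continuous fun θ => g (τ (cpt r θ)) := by
    apply hgc.comp_continuous hτcpt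
    intro θ
    simp only [UD, Metric.mem_ball, dist_zero_right]
    exact lt_trans (hτρ θ) hρ1
  have hgρc : Continuous fun t => g (cpt ρ t) := cont_comp_cpt hρ0.le hgcρ
  set μ : MeasureTheory.Measure ℝ := MeasureTheory.volume.restrict (Set.Ioc 0 (2*π)) with hμ
  have hIoc : ∀ (u : ℝ → ℝ), (∫ x in (0:ℝ)..(2*π), u x) = ∫ x, u x ∂μ := fun u => by
    rw [hμ, intervalIntegral.integral_of_le two_pi_pos.le]
  have hIocC : ∀ (u : ℝ → ℂ), (∫ x in (0:ℝ)..(2*π), u x) = ∫ x, u x ∂μ := fun u => by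
    rw [hμ, intervalIntegral.integral_of_le two_pi_pos.le]
  -- the product-integrable kernel
  have hΦc : Continuous (fun p : ℝ × ℝ =>
      ((ρ^2 - ‖τ (cpt r p.1)‖^2)/‖cpt ρ p.2 - τ (cpt r p.1)‖^2) * ‖g (cpt ρ p.2)‖^2) := by
    apply Continuous.mul
    · apply Continuous.div
      · exact continuous_const.sub ((hτcpt.comp continuous_fst).norm.pow 2)
      · exact (((continuous_cpt ρ).comp continuous_snd).sub
          (hτcpt.comp continuous_fst)).norm.pow 2
      · rintro ⟨θ, t⟩
        exact pow_ne_zero 2 (norm_ne_zero_iff.mpr (cpt_sub_ne_zero hρ0 (hτρ θ) t))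
    · exact (hgρc.comp continuous_snd).norm.pow 2
  have hprod : MeasureTheory.Integrable (fun p : ℝ × ℝ =>
      ((ρ^2 - ‖τ (cpt r p.1)‖^2)/‖cpt ρ p.2 - τ (cpt r p.1)‖^2) * ‖g (cpt ρ p.2)‖^2)
      (μ.prod μ) := by
    rw [hμ, MeasureTheory.Measure.prod_restrict]
    apply MeasureTheory.IntegrableOn.mono_set
      (t := Set.Icc (0:ℝ) (2*π) ×ˢ Set.Icc (0:ℝ) (2*π))
    · exact hΦc.continuousOn.integrableOn_compact (isCompact_Icc.prod isCompact_Icc)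
    · exact Set.prod_mono Set.Ioc_subset_Icc_self Set.Ioc_subset_Icc_self
  -- pointwise Poisson bound
  have hpt : ∀ θ : ℝ, 2*π * ‖g (τ (cpt r θ))‖^2 ≤
      ∫ t, ((ρ^2 - ‖τ (cpt r θ)‖^2)/‖cpt ρ t - τ (cpt r θ)‖^2) * ‖g (cpt ρ t)‖^2 ∂μ := by
    intro θ
    rw [← hIoc]
    exact poisson_bound hρ0 hgdρ hgcρ (hτρ θ)
  -- mean value in θ
  have hmv : ∀ t : ℝ, (∫ θ, (ρ^2 - ‖τ (cpt r θ)‖^2)/‖cpt ρ t - τ (cpt r θ)‖^2 ∂μ)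
      = 2*π * ((ρ^2 - ‖τ 0‖^2)/‖cpt ρ t - τ 0‖^2) := by
    intro t
    have hξnorm : ‖cpt ρ t‖ = ρ := norm_cpt hρ0.le t
    have hdenF : ∀ z : ℂ, ‖z‖ ≤ r → cpt ρ t - τ z ≠ 0 := by
      intro z hz h0
      rw [sub_eq_zero] at h0
      have h2 := hτR z hz
      rw [← h0, hξnorm] at h2
      exact absurd hRρ (not_lt.mpr h2)
    have hcbr : Metric.closedBall (0:ℂ) r ⊆ UD := Metric.closedBall_subset_ball hr1
    have hFd : DifferentiableOn ℂ (fun z => (cpt ρ t + τ z)/(cpt ρ t - τ z))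
        (Metric.ball 0 r) := by
      apply DifferentiableOn.div
      · exact (differentiableOn_const _).add (hτd.mono (Metric.ball_subset_ball hr1.le))
      · exact (differentiableOn_const _).sub (hτd.mono (Metric.ball_subset_ball hr1.le))
      · intro z hz
        exact hdenF z (le_of_lt (by simpa [Metric.mem_ball, dist_zero_right] using hz))
    have hFc : ContinuousOn (fun z => (cpt ρ t + τ z)/(cpt ρ t - τ z))
        (Metric.closedBall 0 r) := by
      apply ContinuousOn.div
      · exact continuousOn_const.add (hτc.mono hcbr)
      · exact continuousOn_const.sub (hτc.mono hcbr)
      · intro z hz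
        exact hdenF z (by simpa [Metric.mem_closedBall, dist_zero_right] using hz)
    have hMV := mean_value hr0 hFd hFc
    have hFcont : Continuous fun θ => (cpt ρ t + τ (cpt r θ))/(cpt ρ t - τ (cpt r θ)) :=
      hFc.comp_continuous (continuous_cpt r) (cpt_mem_closedBall hr0)
    have hFint : MeasureTheory.Integrable
        (fun θ => (cpt ρ t + τ (cpt r θ))/(cpt ρ t - τ (cpt r θ))) μ :=
      hFcont.integrableOn_Ioc
    have hre : ∀ θ : ℝ, ((cpt ρ t + τ (cpt r θ))/(cpt ρ t - τ (cpt r θ))).re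
        = (ρ^2 - ‖τ (cpt r θ)‖^2)/‖cpt ρ t - τ (cpt r θ)‖^2 := by
      intro θ
      rw [re_formula (by rw [hξnorm]; exact hτρ θ), hξnorm]
    have hstep : (∫ θ, (cpt ρ t + τ (cpt r θ))/(cpt ρ t - τ (cpt r θ)) ∂μ)
        = ((2*π:ℝ):ℂ) * ((cpt ρ t + τ 0)/(cpt ρ t - τ 0)) := by
      rw [← hIocC]
      exact hMV
    calc (∫ θ, (ρ^2 - ‖τ (cpt r θ)‖^2)/‖cpt ρ t - τ (cpt r θ)‖^2 ∂μ)
        = ∫ θ, ((cpt ρ t + τ (cpt r θ))/(cpt ρ t - τ (cpt r θ))).re ∂μ := by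
          rw [show (fun θ : ℝ => (ρ^2 - ‖τ (cpt r θ)‖^2)/‖cpt ρ t - τ (cpt r θ)‖^2)
            = fun θ => ((cpt ρ t + τ (cpt r θ))/(cpt ρ t - τ (cpt r θ))).re
            from funext fun θ => (hre θ).symm]
      _ = (∫ θ, (cpt ρ t + τ (cpt r θ))/(cpt ρ t - τ (cpt r θ)) ∂μ).re := by
          have hh := integral_re hFint
          simpa only [RCLike.re_to_complex] using hh
      _ = (((2*π:ℝ):ℂ) * ((cpt ρ t + τ 0)/(cpt ρ t - τ 0))).re := by rw [hstep]
      _ = 2*π * ((cpt ρ t + τ 0)/(cpt ρ t - τ 0)).re := by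
          simp [Complex.mul_re]
      _ = 2*π * ((ρ^2 - ‖τ 0‖^2)/‖cpt ρ t - τ 0‖^2) := by
          rw [re_formula (by rw [hξnorm]; exact hτ0ρ), hξnorm]
  -- kernel bound at the center
  have hker_le : ∀ t : ℝ, (ρ^2 - ‖τ 0‖^2)/‖cpt ρ t - τ 0‖^2
      ≤ (ρ + ‖τ 0‖)/(ρ - ‖τ 0‖) := by
    intro t
    have h1 : ρ - ‖τ 0‖ ≤ ‖cpt ρ t - τ 0‖ := by
      have h2 := norm_sub_norm_le (cpt ρ t) (τ 0)
      rw [norm_cpt hρ0.le] at h2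
      linarith
    have hpos : 0 < ρ - ‖τ 0‖ := by linarith
    have h2 : (ρ - ‖τ 0‖)^2 ≤ ‖cpt ρ t - τ 0‖^2 := by nlinarith
    have h3 : 0 < ‖cpt ρ t - τ 0‖^2 := by nlinarith
    have step : (ρ^2 - ‖τ 0‖^2)/‖cpt ρ t - τ 0‖^2 ≤ (ρ^2 - ‖τ 0‖^2)/(ρ - ‖τ 0‖)^2 := by
      apply div_le_div_of_nonneg_left _ (by positivity) h2
      nlinarith [norm_nonneg (τ 0)]
    calc (ρ^2 - ‖τ 0‖^2)/‖cpt ρ t - τ 0‖^2 ≤ (ρ^2 - ‖τ 0‖^2)/(ρ - ‖τ 0‖)^2 := step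
      _ = (ρ + ‖τ 0‖)/(ρ - ‖τ 0‖) := by
          rw [show ρ^2 - ‖τ 0‖^2 = (ρ + ‖τ 0‖) * (ρ - ‖τ 0‖) by ring, sq]
          rw [mul_div_mul_right _ _ hpos.ne']
  -- assemble
  have hBnn : 0 ≤ (ρ + ‖τ 0‖)/(ρ - ‖τ 0‖) := by
    apply div_nonneg <;> [skip; linarith]
    positivity
  have main : 2*π * J (fun θ => g (τ (cpt r θ)))
      ≤ 2*π * (((ρ + ‖τ 0‖)/(ρ - ‖τ 0‖)) * J (fun t => g (cpt ρ t))) := by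
    have lhs_eq : 2*π * J (fun θ => g (τ (cpt r θ)))
        = ∫ θ, 2*π * ‖g (τ (cpt r θ))‖^2 ∂μ := by
      rw [J, hIoc fun θ => ‖g (τ (cpt r θ))‖^2, ← MeasureTheory.integral_const_mul]
    have rhs_eq : 2*π * (((ρ + ‖τ 0‖)/(ρ - ‖τ 0‖)) * J (fun t => g (cpt ρ t)))
        = ∫ t, 2*π * (((ρ + ‖τ 0‖)/(ρ - ‖τ 0‖)) * ‖g (cpt ρ t)‖^2) ∂μ := by
      rw [J, hIoc fun t => ‖g (cpt ρ t)‖^2, ← MeasureTheory.integral_const_mul,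
        ← MeasureTheory.integral_const_mul]
    rw [lhs_eq, rhs_eq]
    have int1 : MeasureTheory.Integrable (fun θ => 2*π * ‖g (τ (cpt r θ))‖^2) μ :=
      (continuous_const.mul (hgτc.norm.pow 2)).integrableOn_Ioc
    have int2 : MeasureTheory.Integrable (fun θ => ∫ t,
        ((ρ^2 - ‖τ (cpt r θ)‖^2)/‖cpt ρ t - τ (cpt r θ)‖^2) * ‖g (cpt ρ t)‖^2 ∂μ) μ :=
      hprod.integral_prod_left
    have int3 : MeasureTheory.Integrable (fun t => ∫ θ,
        ((ρ^2 - ‖τ (cpt r θ)‖^2)/‖cpt ρ t - τ (cpt r θ)‖^2) * ‖g (cpt ρ t)‖^2 ∂μ) μ :=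
      hprod.integral_prod_right
    have int4 : MeasureTheory.Integrable
        (fun t => 2*π * (((ρ + ‖τ 0‖)/(ρ - ‖τ 0‖)) * ‖g (cpt ρ t)‖^2)) μ :=
      (continuous_const.mul (continuous_const.mul (hgρc.norm.pow 2))).integrableOn_Ioc
    calc (∫ θ, 2*π * ‖g (τ (cpt r θ))‖^2 ∂μ)
        ≤ ∫ θ, (∫ t, ((ρ^2 - ‖τ (cpt r θ)‖^2)/‖cpt ρ t - τ (cpt r θ)‖^2)
            * ‖g (cpt ρ t)‖^2 ∂μ) ∂μ :=
          MeasureTheory.integral_mono int1 int2 fun θ => hpt θ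
      _ = ∫ t, (∫ θ, ((ρ^2 - ‖τ (cpt r θ)‖^2)/‖cpt ρ t - τ (cpt r θ)‖^2)
            * ‖g (cpt ρ t)‖^2 ∂μ) ∂μ :=
          MeasureTheory.integral_integral_swap hprod
      _ ≤ ∫ t, 2*π * (((ρ + ‖τ 0‖)/(ρ - ‖τ 0‖)) * ‖g (cpt ρ t)‖^2) ∂μ := by
          apply MeasureTheory.integral_mono int3 int4
          intro t
          dsimp only
          have e : (∫ θ, ((ρ^2 - ‖τ (cpt r θ)‖^2)/‖cpt ρ t - τ (cpt r θ)‖^2)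
              * ‖g (cpt ρ t)‖^2 ∂μ)
              = (∫ θ, (ρ^2 - ‖τ (cpt r θ)‖^2)/‖cpt ρ t - τ (cpt r θ)‖^2 ∂μ)
                * ‖g (cpt ρ t)‖^2 :=
            MeasureTheory.integral_mul_const _ _
          rw [e, hmv t]
          have hg2 : (0:ℝ) ≤ ‖g (cpt ρ t)‖^2 := by positivity
          nlinarith [mul_le_mul_of_nonneg_left
            (mul_le_mul_of_nonneg_right (hker_le t) hg2) two_pi_pos.le]
  have h2π : (0:ℝ) < 2*π := two_pi_pos
  nlinarith [main]

lemma J_smul (c : ℂ) (u : ℝ → ℂ) : J (fun θ => c * u θ) = ‖c‖^2 * J u := by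
  unfold J
  rw [← intervalIntegral.integral_const_mul]
  apply intervalIntegral.integral_congr
  intro θ _
  dsimp only
  rw [norm_mul]; ring

lemma intEq (u : ℝ → ℝ) : (∫ x in (0:ℝ)..(2*π), u x)
    = ∫ x, u x ∂(MeasureTheory.volume.restrict (Set.Ioc 0 (2*π))) :=
  intervalIntegral.integral_of_le two_pi_pos.le

/-- Fatou-type lemma: an L² bound uniform along a pointwise convergent sequence
passes to the limit. -/
lemma J_le_of_tendsto {S : ℕ → ℝ → ℂ} {G : ℝ → ℂ} {A : ℝ}
    (hS : ∀ N, Continuous (S N)) (hG : Continuous G)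
    (hconv : ∀ θ : ℝ, Filter.Tendsto (fun N => S N θ) Filter.atTop (nhds (G θ)))
    (hA : ∀ N, J (S N) ≤ A) : J G ≤ A := by
  set μ : MeasureTheory.Measure ℝ := MeasureTheory.volume.restrict (Set.Ioc 0 (2*π)) with hμ
  have hA0 : 0 ≤ A := le_trans (J_nonneg _) (hA 0)
  have hGm : Continuous fun θ => ‖G θ‖^2 := hG.norm.pow 2
  have key : (∫⁻ θ, ENNReal.ofReal (‖G θ‖^2) ∂μ) ≤ ENNReal.ofReal A := by
    have hpt : ∀ θ : ℝ, ENNReal.ofReal (‖G θ‖^2)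
        = Filter.liminf (fun N => ENNReal.ofReal (‖S N θ‖^2)) Filter.atTop := by
      intro θ
      have ht : Filter.Tendsto (fun N => ENNReal.ofReal (‖S N θ‖^2)) Filter.atTop
          (nhds (ENNReal.ofReal (‖G θ‖^2))) := by
        apply (ENNReal.continuous_ofReal.tendsto _).comp
        exact ((hconv θ).norm).pow 2
      exact ht.liminf_eq.symm
    have hbound : ∀ N, (∫⁻ θ, ENNReal.ofReal (‖S N θ‖^2) ∂μ) ≤ ENNReal.ofReal A := by
      intro N
      have hint : MeasureTheory.Integrable (fun θ => ‖S N θ‖^2) μ :=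
        ((hS N).norm.pow 2).integrableOn_Ioc
      rw [← MeasureTheory.ofReal_integral_eq_lintegral_ofReal hint
        (Filter.Eventually.of_forall fun θ => by positivity)]
      apply ENNReal.ofReal_le_ofReal
      rw [← intEq]
      exact hA N
    calc (∫⁻ θ, ENNReal.ofReal (‖G θ‖^2) ∂μ)
        = ∫⁻ θ, Filter.liminf (fun N => ENNReal.ofReal (‖S N θ‖^2)) Filter.atTop ∂μ :=
          MeasureTheory.lintegral_congr hpt
      _ ≤ Filter.liminf (fun N => ∫⁻ θ, ENNReal.ofReal (‖S N θ‖^2) ∂μ) Filter.atTop :=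
          MeasureTheory.lintegral_liminf_le fun N =>
            ENNReal.measurable_ofReal.comp ((hS N).norm.pow 2).measurable
      _ ≤ Filter.liminf (fun _ => ENNReal.ofReal A) Filter.atTop :=
          Filter.liminf_le_liminf (Filter.Eventually.of_forall hbound)
      _ = ENNReal.ofReal A := Filter.liminf_const _
  have hJG : J G = (∫⁻ θ, ENNReal.ofReal (‖G θ‖^2) ∂μ).toReal := by
    rw [J, intEq]
    exact MeasureTheory.integral_eq_lintegral_of_nonneg_ae
      (Filter.Eventually.of_forall fun θ => by positivity) hGm.aestronglyMeasurable
  rw [hJG]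
  calc (∫⁻ θ, ENNReal.ofReal (‖G θ‖^2) ∂μ).toReal
      ≤ (ENNReal.ofReal A).toReal := ENNReal.toReal_mono ENNReal.ofReal_ne_top key
    _ = A := ENNReal.toReal_ofReal hA0

lemma J_zero : J (fun _ => (0:ℂ)) = 0 := by
  unfold J
  simp

lemma J_const (k : ℂ) : J (fun _ => k) = 2*π*‖k‖^2 := by
  unfold J
  simp [two_pi_pos.le]

/-- finite Minkowski inequality -/
lemma sqrt_J_sum_le (m : ℕ) (v : ℕ → ℝ → ℂ) (hv : ∀ n, Continuous (v n)) :
    Real.sqrt (J (fun θ => ∑ n ∈ Finset.range m, v n θ))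
      ≤ ∑ n ∈ Finset.range m, Real.sqrt (J (v n)) := by
  induction m with
  | zero => simp [J_zero]
  | succ m ih =>
      have hstep : Real.sqrt (J (fun θ => ∑ n ∈ Finset.range (m+1), v n θ))
          ≤ Real.sqrt (J (fun θ => ∑ n ∈ Finset.range m, v n θ)) + Real.sqrt (J (v m)) := by
        have he : (fun θ => ∑ n ∈ Finset.range (m+1), v n θ)
            = fun θ => (∑ n ∈ Finset.range m, v n θ) + v m θ :=
          funext fun θ => Finset.sum_range_succ _ _
        rw [he]
        exact sqrt_J_add_le _ _ (by
          apply continuous_finset_sum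
          exact fun n _ => hv n) (hv m)
      rw [Finset.sum_range_succ]
      exact le_trans hstep (by linarith [ih])

lemma sqrt_J_smul (c : ℂ) (u : ℝ → ℂ) :
    Real.sqrt (J (fun θ => c * u θ)) = ‖c‖ * Real.sqrt (J u) := by
  rw [J_smul, Real.sqrt_mul (by positivity), Real.sqrt_sq (norm_nonneg _)]

lemma sqrt_J_eq_sqrt_meanp (f : ℂ → ℂ) (r : ℝ) :
    Real.sqrt (J (fun θ => f (cpt r θ)))
      = Real.sqrt (2*π) * Real.sqrt (meanp 2 f r) := by
  rw [meanp_two_eq, ← Real.sqrt_mul two_pi_pos.le]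
  congr 1
  field_simp

/-- the monomials are in BMOA -/
lemma memBMOA_pow (n : ℕ) : MemBMOA (fun z : ℂ => z^n) := by
  have hbd : ∀ z ∈ UD, ‖(fun z : ℂ => z^n) z‖ ≤ 1 := by
    intro z hz
    simp only [norm_pow]
    apply pow_le_one₀ (norm_nonneg _)
    exact le_of_lt (by simpa [UD, Metric.mem_ball, dist_zero_right] using hz)
  constructor
  · constructor
    · intro z hz
      exact (analyticAt_id.pow n).analyticWithinAt
    · refine ⟨1, ?_⟩
      rintro x ⟨r, rfl⟩
      dsimp only
      rw [← Real.sqrt_eq_rpow]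
      exact sqrt_meanp_le_of_bound r.2 zero_le_one hbd
  · refine ⟨2, ?_⟩
    rintro x ⟨a, rfl⟩
    apply h2_le_of_bound (by norm_num)
    intro z hz
    calc ‖(mob (a:ℂ) z)^n - (a:ℂ)^n‖ ≤ ‖(mob (a:ℂ) z)^n‖ + ‖(a:ℂ)^n‖ := norm_sub_le _ _
      _ ≤ 1 + 1 := by
          apply add_le_add
          · exact hbd _ (mob_mem_UD a.2 hz)
          · exact hbd _ a.2
      _ = 2 := by norm_num

lemma bmoaNorm_pow_le (n : ℕ) : bmoaNorm (fun z : ℂ => z^(n+1)) ≤ 2 := by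
  have hbd : ∀ z ∈ UD, ‖(fun z : ℂ => z^(n+1)) z‖ ≤ 1 := by
    intro z hz
    simp only [norm_pow]
    apply pow_le_one₀ (norm_nonneg _)
    exact le_of_lt (by simpa [UD, Metric.mem_ball, dist_zero_right] using hz)
  rw [bmoaNorm]
  have h1 : ‖(0:ℂ)^(n+1)‖ = 0 := by simp
  have h2 : bmoaSemi (fun z : ℂ => z^(n+1)) ≤ 2 := by
    apply Real.iSup_le _ (by norm_num)
    intro a
    apply h2_le_of_bound (by norm_num)
    intro z hz
    calc ‖(mob (a:ℂ) z)^(n+1) - (a:ℂ)^(n+1)‖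
        ≤ ‖(mob (a:ℂ) z)^(n+1)‖ + ‖(a:ℂ)^(n+1)‖ := norm_sub_le _ _
      _ ≤ 1 + 1 := add_le_add (hbd _ (mob_mem_UD a.2 hz)) (hbd _ a.2)
      _ = 2 := by norm_num
  calc ‖(0:ℂ)^(n+1)‖ + bmoaSemi (fun z : ℂ => z^(n+1)) = bmoaSemi (fun z : ℂ => z^(n+1)) := by
        rw [h1, zero_add]
    _ ≤ 2 := h2

lemma mob_sub_eq {b w : ℂ} (hb : ‖b‖ < 1) (hw : ‖w‖ < 1) :
    mob b w - b = (((Complex.normSq b : ℝ) - 1 : ℝ) : ℂ) * w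
      * (1 - (starRingEnd ℂ) b * w)⁻¹ := by
  have hd := denom_ne_zero hb.le hw
  rw [mob]
  have hbb : (b : ℂ) * (starRingEnd ℂ) b = ((Complex.normSq b : ℝ) : ℂ) := Complex.mul_conj b
  rw [eq_mul_inv_iff_mul_eq₀ hd, sub_mul, div_mul_cancel₀ _ hd]
  push_cast
  rw [← hbb]
  ring

lemma mem_UD_iff {z : ℂ} : z ∈ UD ↔ ‖z‖ < 1 := by
  simp [UD, Metric.mem_ball, dist_zero_right]

/-- geometric expansion of the weighted composition of a test function -/
lemma hasSum_wcomp_testF {ψ φ : ℂ → ℂ} {a : ℂ} (hφm : Set.MapsTo φ UD UD)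
    (hbU : φ a ∈ UD) {x : ℂ} (hx : x ∈ UD) :
    HasSum (fun n : ℕ => ((((Complex.normSq (φ a) : ℝ) - 1 : ℝ) : ℂ)
        * ((starRingEnd ℂ) (φ a))^n) * (ψ x * φ x^(n+1)))
      (wcomp ψ φ (testF φ a) x) := by
  have hb1 : ‖φ a‖ < 1 := mem_UD_iff.mp hbU
  have hφx1 : ‖φ x‖ < 1 := mem_UD_iff.mp (hφm hx)
  have hnorm : ‖(starRingEnd ℂ) (φ a) * φ x‖ < 1 := by
    rw [norm_mul, RCLike.norm_conj]
    exact prod_lt_one' (norm_nonneg _) hb1.le (norm_nonneg _) hφx1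
  have hgeo := hasSum_geometric_of_norm_lt_one hnorm
  have hs := hgeo.mul_left ((((Complex.normSq (φ a) : ℝ) - 1 : ℝ) : ℂ) * (ψ x * φ x))
  have he : (fun n : ℕ => ((((Complex.normSq (φ a) : ℝ) - 1 : ℝ) : ℂ) * (ψ x * φ x))
        * ((starRingEnd ℂ) (φ a) * φ x)^n)
      = fun n : ℕ => ((((Complex.normSq (φ a) : ℝ) - 1 : ℝ) : ℂ)
        * ((starRingEnd ℂ) (φ a))^n) * (ψ x * φ x^(n+1)) :=
    funext fun n => by rw [mul_pow]; ring
  rw [he] at hs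
  convert hs using 1
  show ψ x * (mob (φ a) (φ x) - φ a) = _
  rw [mob_sub_eq hb1 hφx1]
  ring
  rfl

/-- uniform bound on the radial means of `g ∘ σ_c - g(c)` for `g` in H². -/
lemma bdd_sqrt_meanp_comp {g : ℂ → ℂ} {cc : ℂ} (hcc : cc ∈ UD)
    (hgd : DifferentiableOn ℂ g UD) (hgc : ContinuousOn g UD)
    (hH2 : BddAbove (Set.range fun r : Set.Ico (0:ℝ) 1 => (meanp 2 g r) ^ ((1:ℝ)/2))) :
    BddAbove (Set.range fun r : Set.Ico (0:ℝ) 1 =>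
      Real.sqrt (meanp 2 (fun z => g (mob cc z) - g cc) r)) := by
  obtain ⟨B, hB⟩ := hH2
  have hcc1 : ‖cc‖ < 1 := mem_UD_iff.mp hcc
  set B' := max B 0 with hB'def
  have hB'0 : 0 ≤ B' := le_max_right _ _
  have hB' : ∀ ρ' : ℝ, ρ' ∈ Set.Ico (0:ℝ) 1 → Real.sqrt (meanp 2 g ρ') ≤ B' := by
    intro ρ' h
    have h1 : (meanp 2 g ρ') ^ ((1:ℝ)/2) ≤ B := hB ⟨(⟨ρ', h⟩ : Set.Ico (0:ℝ) 1), rfl⟩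
    rw [← Real.sqrt_eq_rpow] at h1
    exact le_trans h1 (le_max_left _ _)
  set C₀ := 4/(1-‖cc‖) with hC₀def
  have hC₀0 : 0 ≤ C₀ := by
    apply div_nonneg (by norm_num)
    linarith
  refine ⟨Real.sqrt (C₀ * (2*π*(B' + ‖g cc‖)^2) / (2*π)), ?_⟩
  rintro x ⟨⟨s, hs⟩, rfl⟩
  dsimp only
  have hRs1 : Rb cc s < 1 := Rb_lt_one hcc1 hs.1 hs.2
  set ρs := (1 + max (Rb cc s) ‖cc‖)/2 with hρsdef
  have hmax1 : max (Rb cc s) ‖cc‖ < 1 := max_lt hRs1 hcc1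
  have hmax0 : 0 ≤ max (Rb cc s) ‖cc‖ := le_trans (Rb_nonneg cc s) (le_max_left _ _)
  have hρs1 : ρs < 1 := by rw [hρsdef]; linarith
  have hRρ : Rb cc s < ρs := by
    have := le_max_left (Rb cc s) ‖cc‖
    rw [hρsdef]; linarith [max_lt hRs1 hcc1]
  have hccρ : ‖cc‖ < ρs := by
    have := le_max_right (Rb cc s) ‖cc‖
    rw [hρsdef]; linarith
  have hτR : ∀ z : ℂ, ‖z‖ ≤ s → ‖mob cc z‖ ≤ Rb cc s :=
    fun z hz => mob_norm_le_Rb hcc1 hz hs.2.le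
  have hgd' : DifferentiableOn ℂ (fun z => g z - g cc) UD :=
    hgd.sub (differentiableOn_const _)
  have hgc' : ContinuousOn (fun z => g z - g cc) UD :=
    hgc.sub continuousOn_const
  have hcb := comp_bound hgd' hgc' (mob_differentiableOn hcc1.le)
    (mob_continuousOn hcc1.le) hs.1 hs.2 hτR (Rb_nonneg _ _) hRρ hρs1
  rw [mob_zero] at hcb
  have hCle : (ρs + ‖cc‖)/(ρs - ‖cc‖) ≤ C₀ := by
    rw [hC₀def, div_le_div_iff₀ (by linarith) (by linarith)]
    have e1 : ρs ≤ 1 := hρs1.le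
    have e2 : (1+‖cc‖)/2 ≤ ρs := by
      rw [hρsdef]
      have := le_max_right (Rb cc s) ‖cc‖
      linarith
    nlinarith [e1, e2, norm_nonneg cc, sq_nonneg (1-‖cc‖), sq_nonneg (ρs-1),
      mul_nonneg (sub_nonneg.mpr e1) (by linarith : (0:ℝ) ≤ 1 - ‖cc‖)]
  have hρs0 : 0 ≤ ρs := by rw [hρsdef]; linarith
  have hJρ : J (fun t => g (cpt ρs t) - g cc) ≤ 2*π*(B' + ‖g cc‖)^2 := by
    have hgcont : Continuous fun t => g (cpt ρs t) :=
      cont_comp_cpt hρs0 (hgc.mono (Metric.closedBall_subset_ball hρs1))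
    have hadd := sqrt_J_add_le (fun t => g (cpt ρs t)) (fun _ => -(g cc)) hgcont
      continuous_const
    have heq : (fun t : ℝ => g (cpt ρs t) + -(g cc)) = fun t => g (cpt ρs t) - g cc :=
      funext fun t => (sub_eq_add_neg _ _).symm
    rw [heq] at hadd
    have h1 : Real.sqrt (J (fun t => g (cpt ρs t))) ≤ Real.sqrt (2*π) * B' := by
      rw [sqrt_J_eq_sqrt_meanp]
      exact mul_le_mul_of_nonneg_left (hB' ρs ⟨hρs0, hρs1⟩) (Real.sqrt_nonneg _)
    have h2 : Real.sqrt (J (fun _ : ℝ => -(g cc))) = Real.sqrt (2*π) * ‖g cc‖ := by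
      rw [J_const, norm_neg, Real.sqrt_mul two_pi_pos.le, Real.sqrt_sq (norm_nonneg _)]
    have h3 : Real.sqrt (J (fun t => g (cpt ρs t) - g cc))
        ≤ Real.sqrt (2*π) * (B' + ‖g cc‖) := by
      calc Real.sqrt (J (fun t => g (cpt ρs t) - g cc))
          ≤ Real.sqrt (J (fun t => g (cpt ρs t))) + Real.sqrt (J (fun _ : ℝ => -(g cc))) :=
            hadd
        _ ≤ Real.sqrt (2*π) * B' + Real.sqrt (2*π) * ‖g cc‖ := by
            rw [h2]; linarith
        _ = Real.sqrt (2*π) * (B' + ‖g cc‖) := by ring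
    have h4 : J (fun t => g (cpt ρs t) - g cc)
        = Real.sqrt (J (fun t => g (cpt ρs t) - g cc))^2 :=
      (Real.sq_sqrt (J_nonneg _)).symm
    rw [h4]
    calc Real.sqrt (J (fun t => g (cpt ρs t) - g cc))^2
        ≤ (Real.sqrt (2*π) * (B' + ‖g cc‖))^2 := by
          apply pow_le_pow_left₀ (Real.sqrt_nonneg _) h3
      _ = 2*π*(B' + ‖g cc‖)^2 := by
          rw [mul_pow, Real.sq_sqrt two_pi_pos.le]
  have hfinal : J (fun θ => g (mob cc (cpt s θ)) - g cc)
      ≤ C₀ * (2*π*(B' + ‖g cc‖)^2) := by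
    calc J (fun θ => g (mob cc (cpt s θ)) - g cc)
        ≤ (ρs + ‖cc‖)/(ρs - ‖cc‖) * J (fun t => g (cpt ρs t) - g cc) := hcb
      _ ≤ C₀ * (2*π*(B' + ‖g cc‖)^2) := by
          apply mul_le_mul hCle hJρ (J_nonneg _) hC₀0
  rw [meanp_two_eq]
  apply Real.sqrt_le_sqrt
  rw [div_le_div_iff₀ two_pi_pos two_pi_pos]
  have : J (fun θ => (fun z => g (mob cc z) - g cc) (cpt s θ))
      = J (fun θ => g (mob cc (cpt s θ)) - g cc) := rfl
  rw [this]
  nlinarith [hfinal, two_pi_pos]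

end Stmt4Aux
end Stmt4Aux

open Stmt4Aux
open scoped Real

set_option maxHeartbeats 2000000 in
/-- `limsup_{|φ(a)|→1} ‖W_{ψ,φ} f_a‖_* ≤ 2 limsup_n ‖ψ φⁿ‖_*`. -/
theorem stmt4 :
    ∀ ψ φ : ℂ → ℂ, AnalyticOn ℂ ψ UD → SelfMap φ → BoundedOnBMOA ψ φ →
      ∀ ε > (0:ℝ), ∃ r : ℝ, r < 1 ∧ ∀ a ∈ UD, r < ‖φ a‖ →
        bmoaSemi (wcomp ψ φ (testF φ a)) ≤
          2 * Filter.limsup (fun n : ℕ => bmoaSemi (fun z => ψ z * φ z ^ n)) atTop + ε := by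
  intro ψ φ hψ hφ hW ε hε
  obtain ⟨M, hM0, hM⟩ := hW
  have hψd : DifferentiableOn ℂ ψ UD := hψ.differentiableOn
  have hψc : ContinuousOn ψ UD := hψ.continuousOn
  have hφm : Set.MapsTo φ UD UD := hφ.2
  have hφd : DifferentiableOn ℂ φ UD := hφ.1.differentiableOn
  have hφc : ContinuousOn φ UD := hφ.1.continuousOn
  set u : ℕ → ℝ := fun n => bmoaSemi (fun z => ψ z * φ z ^ n) with hu_def
  have hWn : ∀ n : ℕ, MemBMOA (fun z => ψ z * φ z ^ (n+1))
      ∧ bmoaSemi (fun z => ψ z * φ z ^ (n+1)) ≤ M * 2 := by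
    intro n
    obtain ⟨h1, hle⟩ := hM _ (Stmt4Aux.memBMOA_pow (n+1))
    have heq : wcomp ψ φ (fun z : ℂ => z^(n+1)) = fun z => ψ z * φ z ^ (n+1) := rfl
    rw [heq] at h1 hle
    refine ⟨h1, ?_⟩
    have h3 : bmoaNorm (fun z : ℂ => z^(n+1)) ≤ 2 := Stmt4Aux.bmoaNorm_pow_le n
    have h4 : bmoaSemi (fun z => ψ z * φ z ^ (n+1))
        ≤ bmoaNorm (fun z => ψ z * φ z ^ (n+1)) := by
      rw [bmoaNorm]
      have := norm_nonneg ((fun z => ψ z * φ z ^ (n+1)) 0)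
      linarith
    calc bmoaSemi (fun z => ψ z * φ z ^ (n+1))
        ≤ bmoaNorm (fun z => ψ z * φ z ^ (n+1)) := h4
      _ ≤ M * bmoaNorm (fun z : ℂ => z^(n+1)) := hle
      _ ≤ M * 2 := mul_le_mul_of_nonneg_left h3 hM0
  have hubd : ∀ n : ℕ, u (n+1) ≤ M*2 := fun n => (hWn n).2
  have hunn : ∀ n, 0 ≤ u n := fun n => bmoaSemi_nonneg _
  set L := Filter.limsup u Filter.atTop with hL_def
  have hbdd : Filter.IsBoundedUnder (· ≤ ·) Filter.atTop u := by
    refine ⟨max (u 0) (M*2), ?_⟩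
    rw [Filter.eventually_map]
    filter_upwards [Filter.eventually_ge_atTop 1] with n hn
    obtain ⟨k, rfl⟩ := Nat.exists_eq_add_of_le hn
    have := hubd k
    simp only [Nat.add_comm 1 k] at *
    exact le_trans this (le_max_right _ _)
  have hL0 : 0 ≤ L :=
    Filter.le_limsup_of_frequently_le (Filter.Frequently.of_forall hunn) hbdd
  have hevN : ∀ᶠ n in Filter.atTop, u n < L + ε/4 :=
    Filter.eventually_lt_of_limsup_lt (by linarith) hbdd
  obtain ⟨N, hN⟩ := Filter.eventually_atTop.mp hevN
  have hDpos : (0:ℝ) < 4*(N:ℝ)*(M*2)+1 := by positivity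
  refine ⟨max 0 (1 - ε/(4*(N:ℝ)*(M*2)+1)), ?_, ?_⟩
  · apply max_lt (by norm_num)
    have : 0 < ε/(4*(N:ℝ)*(M*2)+1) := by positivity
    linarith
  intro a haU hra
  have hbU : φ a ∈ UD := hφm haU
  have hb1 : ‖φ a‖ < 1 := Stmt4Aux.mem_UD_iff.mp hbU
  have hb0 : (0:ℝ) ≤ ‖φ a‖ := norm_nonneg _
  have hb2 : (0:ℝ) ≤ 1 - ‖φ a‖^2 := by nlinarith
  set c : ℕ → ℂ := fun n => (((Complex.normSq (φ a) : ℝ) - 1 : ℝ) : ℂ)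
    * ((starRingEnd ℂ) (φ a))^n with hc_def
  have hcn : ∀ n, ‖c n‖ = (1 - ‖φ a‖^2) * ‖φ a‖^n := by
    intro n
    rw [hc_def]
    rw [norm_mul, norm_pow, RCLike.norm_conj, Complex.norm_real, Real.norm_eq_abs]
    congr 1
    rw [show Complex.normSq (φ a) = ‖φ a‖^2 by rw [Complex.sq_norm]]
    rw [abs_of_nonpos (by nlinarith)]
    ring
  have hsummable : Summable (fun n => ‖c n‖ * u (n+1)) := by
    apply Summable.of_nonneg_of_le (fun n => mul_nonneg (norm_nonneg _) (hunn _))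
      (fun n => ?_)
      (Summable.mul_left ((1-‖φ a‖^2) * (M*2)) (summable_geometric_of_lt_one hb0 hb1))
    rw [hcn]
    calc (1 - ‖φ a‖^2) * ‖φ a‖^n * u (n+1)
        ≤ (1 - ‖φ a‖^2) * ‖φ a‖^n * (M*2) :=
          mul_le_mul_of_nonneg_left (hubd n) (by positivity)
      _ = (1-‖φ a‖^2) * (M*2) * ‖φ a‖^n := by ring
  set T := ∑' n, ‖c n‖ * u (n+1) with hT_def
  have hT0 : 0 ≤ T := tsum_nonneg fun n => mul_nonneg (norm_nonneg _) (hunn _)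
  -- MAIN BOUND : bmoaSemi (W f_a) ≤ T
  have hmain : bmoaSemi (wcomp ψ φ (testF φ a)) ≤ T := by
    apply Real.iSup_le _ hT0
    intro cc
    rw [Stmt4Aux.h2_eq]
    apply Real.iSup_le _ hT0
    rintro ⟨r', hr'⟩
    dsimp only
    rw [Stmt4Aux.meanp_two_eq]
    have hcc1 : ‖(cc:ℂ)‖ < 1 := Stmt4Aux.mem_UD_iff.mp cc.2
    have hmobcont : Continuous fun θ => mob cc (cpt r' θ) :=
      (Stmt4Aux.mob_continuousOn hcc1.le).comp_continuous (continuous_cpt r')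
        (fun θ => cpt_mem_UD hr'.1 hr'.2 θ)
    have hmobmem : ∀ θ, mob (cc:ℂ) (cpt r' θ) ∈ UD :=
      fun θ => Stmt4Aux.mob_mem_UD cc.2 (cpt_mem_UD hr'.1 hr'.2 θ)
    have hψcc : Continuous fun θ => ψ (mob cc (cpt r' θ)) :=
      hψc.comp_continuous hmobcont hmobmem
    have hφcc : Continuous fun θ => φ (mob cc (cpt r' θ)) :=
      hφc.comp_continuous hmobcont hmobmem
    have hφmem : ∀ θ, φ (mob (cc:ℂ) (cpt r' θ)) ∈ UD := fun θ => hφm (hmobmem θ)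
    -- Gnf n : the n-th layer
    set Gnf : ℕ → ℂ → ℂ := fun n z =>
      ψ (mob cc z) * φ (mob cc z)^(n+1) - ψ (cc:ℂ) * φ (cc:ℂ)^(n+1) with hGnf_def
    have hGnc : ∀ n : ℕ, Continuous fun θ => Gnf n (cpt r' θ) :=
      fun n => (hψcc.mul (hφcc.pow _)).sub continuous_const
    have hFmob : Continuous fun θ => wcomp ψ φ (testF φ a) (mob cc (cpt r' θ)) := by
      have h1 : Continuous fun θ => mob (φ a) (φ (mob cc (cpt r' θ))) :=
        (Stmt4Aux.mob_continuousOn hb1.le).comp_continuous hφcc hφmem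
      exact hψcc.mul (h1.sub continuous_const)
    -- chain : per-n bound on the means
    have hchain : ∀ n : ℕ,
        Real.sqrt (meanp 2 (Gnf n) r') ≤ u (n+1) := by
      intro n
      have hgnd : DifferentiableOn ℂ (fun z => ψ z * φ z^(n+1)) UD :=
        hψd.mul (hφd.pow _)
      have hgnc : ContinuousOn (fun z => ψ z * φ z^(n+1)) UD :=
        hψc.mul (hφc.pow _)
      have hBdd := Stmt4Aux.bdd_sqrt_meanp_comp cc.2 hgnd hgnc (hWn n).1.1.2
      have hle1 : Real.sqrt (meanp 2 (Gnf n) r')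
          ≤ ⨆ r : Set.Ico (0:ℝ) 1, Real.sqrt (meanp 2
            (fun z => (fun w => ψ w * φ w^(n+1)) (mob cc z)
              - (fun w => ψ w * φ w^(n+1)) (cc:ℂ)) r) :=
        le_ciSup hBdd (⟨r', hr'⟩ : Set.Ico (0:ℝ) 1)
      have hle2 : h2 (fun z => (fun w => ψ w * φ w^(n+1)) (mob cc z)
          - (fun w => ψ w * φ w^(n+1)) (cc:ℂ)) ≤ u (n+1) :=
        le_ciSup (hWn n).1.2 cc
      rw [Stmt4Aux.h2_eq] at hle2
      exact le_trans hle1 hle2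
    -- per-N Minkowski bound
    have hSN : ∀ N' : ℕ, J (fun θ => ∑ n ∈ Finset.range N', c n * Gnf n (cpt r' θ))
        ≤ 2*π*T^2 := by
      intro N'
      have hmink := Stmt4Aux.sqrt_J_sum_le N' (fun n θ => c n * Gnf n (cpt r' θ))
        (fun n => continuous_const.mul (hGnc n))
      have hstep : ∑ n ∈ Finset.range N',
          Real.sqrt (J (fun θ => c n * Gnf n (cpt r' θ)))
          ≤ Real.sqrt (2*π) * T := by
        have h1 : ∀ n ∈ Finset.range N',
            Real.sqrt (J (fun θ => c n * Gnf n (cpt r' θ)))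
            ≤ Real.sqrt (2*π) * (‖c n‖ * u (n+1)) := by
          intro n _
          rw [Stmt4Aux.sqrt_J_smul]
          calc ‖c n‖ * Real.sqrt (J (fun θ => Gnf n (cpt r' θ)))
              = ‖c n‖ * (Real.sqrt (2*π) * Real.sqrt (meanp 2 (Gnf n) r')) := by
                rw [Stmt4Aux.sqrt_J_eq_sqrt_meanp]
            _ ≤ ‖c n‖ * (Real.sqrt (2*π) * u (n+1)) := by
                apply mul_le_mul_of_nonneg_left _ (norm_nonneg _)
                exact mul_le_mul_of_nonneg_left (hchain n) (Real.sqrt_nonneg _)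
            _ = Real.sqrt (2*π) * (‖c n‖ * u (n+1)) := by ring
        calc ∑ n ∈ Finset.range N', Real.sqrt (J (fun θ => c n * Gnf n (cpt r' θ)))
            ≤ ∑ n ∈ Finset.range N', Real.sqrt (2*π) * (‖c n‖ * u (n+1)) :=
              Finset.sum_le_sum h1
          _ = Real.sqrt (2*π) * ∑ n ∈ Finset.range N', ‖c n‖ * u (n+1) := by
              rw [Finset.mul_sum]
          _ ≤ Real.sqrt (2*π) * T := by
              apply mul_le_mul_of_nonneg_left _ (Real.sqrt_nonneg _)
              exact Summable.sum_le_tsum _ (fun i _ => mul_nonneg (norm_nonneg _) (hunn _))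
                hsummable
      have hfin : Real.sqrt (J (fun θ => ∑ n ∈ Finset.range N', c n * Gnf n (cpt r' θ)))
          ≤ Real.sqrt (2*π) * T := le_trans hmink hstep
      calc J (fun θ => ∑ n ∈ Finset.range N', c n * Gnf n (cpt r' θ))
          = Real.sqrt (J (fun θ => ∑ n ∈ Finset.range N', c n * Gnf n (cpt r' θ)))^2 :=
            (Real.sq_sqrt (J_nonneg _)).symm
        _ ≤ (Real.sqrt (2*π) * T)^2 := pow_le_pow_left₀ (Real.sqrt_nonneg _) hfin 2
        _ = 2*π*T^2 := by rw [mul_pow, Real.sq_sqrt two_pi_pos.le]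
    -- pointwise convergence of the partial sums
    have hconv : ∀ θ : ℝ, Filter.Tendsto
        (fun N' => ∑ n ∈ Finset.range N', c n * Gnf n (cpt r' θ)) Filter.atTop
        (nhds (wcomp ψ φ (testF φ a) (mob cc (cpt r' θ)) - wcomp ψ φ (testF φ a) cc)) := by
      intro θ
      have h1 := Stmt4Aux.hasSum_wcomp_testF (ψ := ψ) hφm hbU (hmobmem θ)
      have h2' := Stmt4Aux.hasSum_wcomp_testF (ψ := ψ) hφm hbU cc.2
      have h3 := h1.sub h2'
      have he : (fun n : ℕ => ((((Complex.normSq (φ a) : ℝ) - 1 : ℝ) : ℂ)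
            * ((starRingEnd ℂ) (φ a))^n)
              * (ψ (mob cc (cpt r' θ)) * φ (mob cc (cpt r' θ))^(n+1))
            - ((((Complex.normSq (φ a) : ℝ) - 1 : ℝ) : ℂ) * ((starRingEnd ℂ) (φ a))^n)
              * (ψ (cc:ℂ) * φ (cc:ℂ)^(n+1)))
          = fun n : ℕ => c n * Gnf n (cpt r' θ) := by
        funext n
        rw [hc_def, hGnf_def]
        ring
      rw [he] at h3
      exact h3.tendsto_sum_nat
    -- Fatou
    have hJG : J (fun θ => wcomp ψ φ (testF φ a) (mob cc (cpt r' θ))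
        - wcomp ψ φ (testF φ a) cc) ≤ 2*π*T^2 :=
      Stmt4Aux.J_le_of_tendsto
        (fun N' => continuous_finset_sum _ fun n _ => continuous_const.mul (hGnc n))
        (hFmob.sub continuous_const) hconv hSN
    -- conclude
    have hdiv : J (fun θ => wcomp ψ φ (testF φ a) (mob cc (cpt r' θ))
        - wcomp ψ φ (testF φ a) cc) / (2*π) ≤ T^2 := by
      rw [div_le_iff₀ two_pi_pos]
      nlinarith [hJG, two_pi_pos]
    calc Real.sqrt (J (fun θ => (fun z => wcomp ψ φ (testF φ a) (mob cc z)
          - wcomp ψ φ (testF φ a) (cc:ℂ)) (cpt r' θ)) / (2*π))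
        ≤ Real.sqrt (T^2) := Real.sqrt_le_sqrt hdiv
      _ = T := Real.sqrt_sq hT0
  -- ARITHMETIC : T ≤ 2L + ε
  have hsplit := Summable.sum_add_tsum_nat_add (f := fun n => ‖c n‖ * u (n+1)) N hsummable
  have h1r : 1 - ‖φ a‖ < ε/(4*(N:ℝ)*(M*2)+1) := by
    have h1 := le_max_right (0:ℝ) (1 - ε/(4*(N:ℝ)*(M*2)+1))
    linarith [hra, h1]
  have hhead : ∑ n ∈ Finset.range N, ‖c n‖ * u (n+1) ≤ ε/2 := by
    have hterm : ∀ n ∈ Finset.range N, ‖c n‖ * u (n+1) ≤ (1-‖φ a‖^2) * (M*2) := by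
      intro n _
      rw [hcn]
      have hpow : ‖φ a‖^n ≤ 1 := pow_le_one₀ hb0 hb1.le
      calc (1-‖φ a‖^2) * ‖φ a‖^n * u (n+1)
          ≤ (1-‖φ a‖^2) * ‖φ a‖^n * (M*2) :=
            mul_le_mul_of_nonneg_left (hubd n) (by positivity)
        _ ≤ (1-‖φ a‖^2) * 1 * (M*2) := by
            apply mul_le_mul_of_nonneg_right _ (by positivity)
            exact mul_le_mul_of_nonneg_left hpow hb2
        _ = (1-‖φ a‖^2) * (M*2) := by ring
    have hsum1 : ∑ n ∈ Finset.range N, ‖c n‖ * u (n+1)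
        ≤ (N:ℝ) * ((1-‖φ a‖^2) * (M*2)) := by
      calc ∑ n ∈ Finset.range N, ‖c n‖ * u (n+1)
          ≤ ∑ _n ∈ Finset.range N, (1-‖φ a‖^2) * (M*2) := Finset.sum_le_sum hterm
        _ = (N:ℝ) * ((1-‖φ a‖^2) * (M*2)) := by
            rw [Finset.sum_const, Finset.card_range, nsmul_eq_mul]
    have h4 : (1 - ‖φ a‖) * (4*(N:ℝ)*(M*2)+1) < ε :=
      (lt_div_iff₀ hDpos).mp h1r
    have h2b : 1 - ‖φ a‖^2 ≤ 2*(1-‖φ a‖) := by nlinarith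
    have hNM : (0:ℝ) ≤ (N:ℝ)*(M*2) := by positivity
    have h1b : 0 ≤ 1 - ‖φ a‖ := by linarith
    nlinarith [hsum1, mul_le_mul_of_nonneg_left h2b hNM,
      mul_nonneg h1b hNM]
  have htail : (∑' i, ‖c (i+N)‖ * u (i+N+1)) ≤ 2*L + ε/2 := by
    have hLε : 0 ≤ L + ε/4 := by linarith
    have htb : ∀ i, ‖c (i+N)‖ * u (i+N+1)
        ≤ ((1-‖φ a‖^2)*(L+ε/4)) * ‖φ a‖^i := by
      intro i
      rw [hcn]
      have hui : u (i+N+1) ≤ L + ε/4 := (hN (i+N+1) (by omega)).le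
      have hpow : ‖φ a‖^(i+N) ≤ ‖φ a‖^i := pow_le_pow_of_le_one hb0 hb1.le (by omega)
      calc (1-‖φ a‖^2) * ‖φ a‖^(i+N) * u (i+N+1)
          ≤ (1-‖φ a‖^2) * ‖φ a‖^i * (L+ε/4) := by
            apply mul_le_mul (mul_le_mul_of_nonneg_left hpow hb2) hui (hunn _)
              (by positivity)
        _ = ((1-‖φ a‖^2)*(L+ε/4)) * ‖φ a‖^i := by ring
    have hsum2 : Summable (fun i => ‖c (i+N)‖ * u (i+N+1)) :=
      (summable_nat_add_iff N).mpr hsummable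
    have hsum3 : Summable (fun i : ℕ => ((1-‖φ a‖^2)*(L+ε/4)) * ‖φ a‖^i) :=
      (summable_geometric_of_lt_one hb0 hb1).mul_left _
    have h1b : 0 < 1 - ‖φ a‖ := by linarith
    calc (∑' i, ‖c (i+N)‖ * u (i+N+1))
        ≤ ∑' i, ((1-‖φ a‖^2)*(L+ε/4)) * ‖φ a‖^i := Summable.tsum_le_tsum htb hsum2 hsum3
      _ = ((1-‖φ a‖^2)*(L+ε/4)) * (1-‖φ a‖)⁻¹ := by
          rw [tsum_mul_left, tsum_geometric_of_lt_one hb0 hb1]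
      _ ≤ 2*(L+ε/4) := by
          rw [inv_eq_one_div, mul_one_div, div_le_iff₀ h1b]
          nlinarith [hLε, hb0, hb1, mul_nonneg hLε (mul_nonneg h1b.le h1b.le)]
      _ = 2*L + ε/2 := by ring
  have hTsum : T = (∑ n ∈ Finset.range N, ‖c n‖ * u (n+1))
      + ∑' i, ‖c (i+N)‖ * u (i+N+1) := by
    rw [hT_def, ← hsplit]
  have harith : T ≤ 2*L + ε := by
    rw [hTsum]
    linarith
  calc bmoaSemi (wcomp ψ φ (testF φ a)) ≤ T := hmain
    _ ≤ 2*L + ε := harith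
    _ = 2 * Filter.limsup (fun n : ℕ => bmoaSemi (fun z => ψ z * φ z ^ n)) Filter.atTop
        + ε := by rw [hL_def, hu_def]
end

section
/- Let φ be an analytic self-map of 𝔻, a ∈ 𝔻, and t ∈ (0,1). Set φ_a = σ_{φ(a)}∘φ∘σ_a and let s(r) = 2(1+r)/(1-r). If |φ(a)| ≤ r and 1 - s(r)^{-1} < t < 1, then {ξ ∈ ∂𝔻 : |(φ∘σ_a)(ξ)| > 1 - s(r)^{-1}(1-t)} ⊆ {ξ ∈ ∂𝔻 : |φ_a(ξ)| > t} ⊆ {ξ ∈ ∂𝔻 : |(φ∘σ_a)(ξ)| > 1 - s(r)(1-t)} (in terms of radial boundary values, almost everywhere on ∂𝔻). -/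
open Complex MeasureTheory Filter Set

lemma normSq_identity (b w : ℂ) :
    Complex.normSq (1 - (starRingEnd ℂ) b * w) - Complex.normSq (b - w)
      = (1 - Complex.normSq b) * (1 - Complex.normSq w) := by
  simp only [Complex.normSq_apply, Complex.sub_re, Complex.sub_im, Complex.mul_re,
    Complex.mul_im, Complex.one_re, Complex.one_im, Complex.conj_re, Complex.conj_im]
  ring

lemma norm_identity (b w : ℂ) :
    ‖1 - (starRingEnd ℂ) b * w‖ ^ 2 - ‖b - w‖ ^ 2 = (1 - ‖b‖ ^ 2) * (1 - ‖w‖ ^ 2) := by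
  simpa only [Complex.sq_norm] using normSq_identity b w

lemma norm_conj_mul (b w : ℂ) : ‖(starRingEnd ℂ) b * w‖ = ‖b‖ * ‖w‖ := by
  simp

lemma denom_bounds (b w : ℂ) :
    1 - ‖b‖ * ‖w‖ ≤ ‖1 - (starRingEnd ℂ) b * w‖ ∧
    ‖1 - (starRingEnd ℂ) b * w‖ ≤ 1 + ‖b‖ * ‖w‖ := by
  constructor
  · have := norm_sub_norm_le (1 : ℂ) ((starRingEnd ℂ) b * w)
    simpa [norm_conj_mul] using this
  · have := norm_sub_le (1 : ℂ) ((starRingEnd ℂ) b * w)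
    simpa [norm_conj_mul] using this

lemma mob_mem_UD {a z : ℂ} (ha : a ∈ UD) (hz : z ∈ UD) : mob a z ∈ UD := by
  simp only [UD, Metric.mem_ball, dist_zero_right] at *
  have hid := norm_identity a z
  have hD1 := (denom_bounds a z).1
  have hDpos : 0 < ‖1 - (starRingEnd ℂ) a * z‖ := by
    nlinarith [norm_nonneg a, norm_nonneg z]
  rw [mob, norm_div, div_lt_one hDpos]
  nlinarith [norm_nonneg (a - z), norm_nonneg a, norm_nonneg z,
    mul_pos (by nlinarith [norm_nonneg a] : (0:ℝ) < 1 - ‖a‖ ^ 2)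
      (by nlinarith [norm_nonneg z] : (0:ℝ) < 1 - ‖z‖ ^ 2),
    sq_nonneg (‖a - z‖ + ‖1 - (starRingEnd ℂ) a * z‖)]

/-- Copy of the real-arithmetic estimate. -/
lemma real_est (r B W Dn Nn : ℝ) (hr : r < 1) (hB0 : 0 ≤ B) (hB : B ≤ r)
    (hW0 : 0 ≤ W) (hW : W ≤ 1) (hN0 : 0 ≤ Nn)
    (hD1 : 1 - B * W ≤ Dn) (hD2 : Dn ≤ 1 + B * W)
    (hN1 : W - B ≤ Nn) (hN2 : Nn ≤ B + W)
    (hid : Dn ^ 2 - Nn ^ 2 = (1 - B ^ 2) * (1 - W ^ 2)) :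
    (1 - r) / (2 * (1 + r)) * (1 - W) ≤ 1 - Nn / Dn ∧
      1 - Nn / Dn ≤ 2 * (1 + r) / (1 - r) * (1 - W) := by
  have hr0 : 0 ≤ r := le_trans hB0 hB
  have hB1 : B < 1 := lt_of_le_of_lt hB hr
  have hW' : (0:ℝ) ≤ 1 - W := by linarith
  have hDpos : 0 < Dn := by nlinarith
  have hD2' : Dn ≤ 2 := by nlinarith
  have hDr : 1 - r ≤ Dn := by nlinarith
  have hsumpos : 0 < Dn + Nn := by linarith
  have hsum_le : Dn + Nn ≤ (1 + B) * (1 + W) := by nlinarith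
  have hsum_ge : (1 - B) * (1 + W) ≤ Dn + Nn := by nlinarith
  have hdiff_ge : (1 - B) * (1 - W) ≤ Dn - Nn := by
    nlinarith [mul_le_mul_of_nonneg_left hsum_le
      (by nlinarith : (0:ℝ) ≤ (1 - B) * (1 - W))]
  have hdiff_le : Dn - Nn ≤ (1 + B) * (1 - W) := by
    nlinarith [mul_le_mul_of_nonneg_left hsum_ge
      (by nlinarith : (0:ℝ) ≤ (1 + B) * (1 - W))]
  have hkey : (Dn - Nn) / Dn = 1 - Nn / Dn := by field_simp
  set c : ℝ := (1 - r) / (2 * (1 + r)) with hcdef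
  set s : ℝ := 2 * (1 + r) / (1 - r) with hsdef
  have hc0 : 0 ≤ c := div_nonneg (by linarith) (by linarith)
  have hs0 : 0 ≤ s := div_nonneg (by linarith) (by linarith)
  have hc2 : c * (2 * (1 + r)) = 1 - r := div_mul_cancel₀ _ (by positivity)
  have hs2 : s * (1 - r) = 2 * (1 + r) := div_mul_cancel₀ _ (by norm_num; linarith)
  have hP0 : 0 ≤ c * (1 - W) := mul_nonneg hc0 hW'
  have hS0 : 0 ≤ s * (1 - W) := mul_nonneg hs0 hW'
  constructor
  · rw [← hkey, le_div_iff₀ hDpos]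
    have hA : c * (1 - W) * Dn ≤ c * (1 - W) * 2 :=
      mul_le_mul_of_nonneg_left hD2' hP0
    have hB' : c * (1 - W) * 2 ≤ c * (1 - W) * (2 * (1 + r)) :=
      mul_le_mul_of_nonneg_left (by linarith) hP0
    have hC : c * (1 - W) * (2 * (1 + r)) = (1 - r) * (1 - W) := by
      rw [mul_right_comm, hc2]
    have hD : (1 - r) * (1 - W) ≤ (1 - B) * (1 - W) :=
      mul_le_mul_of_nonneg_right (by linarith) hW'
    linarith
  · rw [← hkey, div_le_iff₀ hDpos]
    have hE : s * (1 - W) * (1 - r) ≤ s * (1 - W) * Dn :=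
      mul_le_mul_of_nonneg_left hDr hS0
    have hF : s * (1 - W) * (1 - r) = 2 * (1 + r) * (1 - W) := by
      rw [mul_right_comm, hs2]
    have hG : (1 + B) * (1 - W) ≤ 2 * (1 + r) * (1 - W) :=
      mul_le_mul_of_nonneg_right (by linarith) hW'
    linarith

/-- The two-sided estimate `s(r)⁻¹(1-‖w‖) ≤ 1-‖σ_b(w)‖ ≤ s(r)(1-‖w‖)`. -/
lemma mob_est {r : ℝ} (hr : r < 1) {b w : ℂ} (hb : ‖b‖ ≤ r) (hw : ‖w‖ ≤ 1) :
    (sFun r)⁻¹ * (1 - ‖w‖) ≤ 1 - ‖mob b w‖ ∧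
      1 - ‖mob b w‖ ≤ sFun r * (1 - ‖w‖) := by
  have hr0 : 0 ≤ r := le_trans (norm_nonneg b) hb
  have hD1 := (denom_bounds b w).1
  have hD2 := (denom_bounds b w).2
  have hid := norm_identity b w
  have hN1 : ‖w‖ - ‖b‖ ≤ ‖b - w‖ := by
    simpa [norm_sub_rev] using norm_sub_norm_le w b
  have hN2 : ‖b - w‖ ≤ ‖b‖ + ‖w‖ := norm_sub_le b w
  have h := real_est r ‖b‖ ‖w‖ ‖1 - (starRingEnd ℂ) b * w‖ ‖b - w‖ hr
    (norm_nonneg b) hb (norm_nonneg w) hw (norm_nonneg _) hD1 hD2 hN1 hN2 hid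
  have hmob : ‖mob b w‖ = ‖b - w‖ / ‖1 - (starRingEnd ℂ) b * w‖ := norm_div _ _
  have hinv : (sFun r)⁻¹ = (1 - r) / (2 * (1 + r)) := by
    rw [sFun, inv_div]
  rw [hmob, hinv, sFun]
  exact h


/-- boundary level-set inclusions for `φ_a = σ_{φ(a)} ∘ φ ∘ σ_a`, via radial limits. -/
theorem stmt9 :
    ∀ φ : ℂ → ℂ, SelfMap φ → ∀ r : ℝ, r < 1 → ∀ a ∈ UD, ‖φ a‖ ≤ r →
      ∀ t : ℝ, 1 - (sFun r)⁻¹ < t → t < 1 →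
        ∀ ξ : ℂ, ‖ξ‖ = 1 → ∀ w : ℂ, HasRadialLimit (fun z => φ (mob a z)) ξ w →
          (1 - (sFun r)⁻¹ * (1 - t) < ‖w‖ → t < ‖mob (φ a) w‖) ∧
          (t < ‖mob (φ a) w‖ → 1 - sFun r * (1 - t) < ‖w‖) := by
  intro φ hφ0 r hr a ha hφa t ht1 ht2 ξ hξ w hw
  have hr0 : 0 ≤ r := le_trans (norm_nonneg _) hφa
  -- ‖w‖ ≤ 1
  have hw1 : ‖w‖ ≤ 1 := by
    have hmem : Ioo (0:ℝ) 1 ∈ nhdsWithin (1:ℝ) (Iio (1:ℝ)) :=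
      Ioo_mem_nhdsLT_of_mem (by constructor <;> norm_num)
    have hev : ∀ᶠ ρ : ℝ in nhdsWithin (1:ℝ) (Iio (1:ℝ)),
        ‖φ (mob a ((ρ:ℂ) * ξ))‖ ≤ 1 := by
      filter_upwards [hmem] with ρ hρ
      have hzUD : (ρ:ℂ) * ξ ∈ UD := by
        simp only [UD, Metric.mem_ball, dist_zero_right, norm_mul, hξ, mul_one,
          Complex.norm_real, Real.norm_eq_abs]
        rw [abs_of_pos hρ.1]; exact hρ.2
      have := hφ0.2 (mob_mem_UD ha hzUD)
      simp only [UD, Metric.mem_ball, dist_zero_right] at this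
      exact le_of_lt this
    exact le_of_tendsto (hw.norm) hev
  -- main estimates
  have hest := mob_est hr hφa hw1
  have hs_pos : 0 < sFun r := div_pos (by linarith) (by linarith)
  have hinv_pos : 0 < (sFun r)⁻¹ := inv_pos.mpr hs_pos
  constructor
  · intro h1
    have h2 : 1 - ‖w‖ < (sFun r)⁻¹ * (1 - t) := by linarith
    have h3 : sFun r * (1 - ‖w‖) < sFun r * ((sFun r)⁻¹ * (1 - t)) :=
      mul_lt_mul_of_pos_left h2 hs_pos
    rw [← mul_assoc, mul_inv_cancel₀ (ne_of_gt hs_pos), one_mul] at h3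
    have := hest.2
    linarith
  · intro h1
    have h2 : (sFun r)⁻¹ * (1 - ‖w‖) < 1 - t := by linarith [hest.1]
    have h3 : sFun r * ((sFun r)⁻¹ * (1 - ‖w‖)) < sFun r * (1 - t) :=
      mul_lt_mul_of_pos_left h2 hs_pos
    rw [← mul_assoc, mul_inv_cancel₀ (ne_of_gt hs_pos), one_mul] at h3
    linarith
end
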